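/- arXiv:2101.03404 — 3 statements merged into one kernel-verified Lean document; each statement's English description precedes it below -/
import Mathlib

section
/- Let G be a profinite group and let H be a closed subgroup of G with F(G) ≤ H ≤ F₂(G). Then F(H) = F(G). -/
open scoped commutatorElement

/-- Iterated left-normed commutator: `commIter g x n = [g, x, x, ..., x]` with `n` copies of `x`. -/
def commIter {G : Type*} [Group G] (g x : G) : ℕ → G
  | 0 => g
  | n + 1 => ⁅commIter g x n, x⁆

/-- `R` is a right Engel sink of `g`. -/
def IsRightEngelSink {G : Type*} [Group G] (g : G) (R : Set G) : Prop :=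
  ∀ x : G, ∃ n₀ : ℕ, 0 < n₀ ∧ ∀ n, n₀ ≤ n → commIter g x n ∈ R

/-- `E` is a left Engel sink of `g`. -/
def IsLeftEngelSink {G : Type*} [Group G] (g : G) (E : Set G) : Prop :=
  ∀ x : G, ∃ n₀ : ℕ, 0 < n₀ ∧ ∀ n, n₀ ≤ n → commIter x g n ∈ E

/-- A group is locally nilpotent if every finitely generated subgroup is nilpotent. -/
def IsLocallyNilpotent (G : Type*) [Group G] : Prop :=
  ∀ S : Finset G, Group.IsNilpotent ↥(Subgroup.closure (S : Set G))

/-- A topological group is pronilpotent if every quotient by an open normal subgroup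
is nilpotent. -/
def IsPronilpotent (G : Type*) [Group G] [TopologicalSpace G] : Prop :=
  ∀ (N : Subgroup G) (hN : N.Normal), IsOpen (N : Set G) →
    (haveI := hN; Group.IsNilpotent (G ⧸ N))

/-- All quotients of `G` by open normal subgroups have order coprime to `k`;
this is the coprimality condition for an automorphism of order `k` of `G`. -/
def QuotientsCoprimeTo (G : Type*) [Group G] [TopologicalSpace G] (k : ℕ) : Prop :=
  ∀ N : Subgroup G, N.Normal → IsOpen (N : Set G) → Nat.Coprime N.index k

/-- `F` is the largest closed normal pronilpotent subgroup of `G`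
(the pronilpotent radical `F(G)`). -/
def IsPronilpotentRadical (G : Type*) [Group G] [TopologicalSpace G] (F : Subgroup G) : Prop :=
  IsClosed (F : Set G) ∧ F.Normal ∧ IsPronilpotent ↥F ∧
    ∀ K : Subgroup G, IsClosed (K : Set G) → K.Normal → IsPronilpotent ↥K → K ≤ F

/-- `F2` is the second term of the pronilpotent series: the preimage in `G` of the
pronilpotent radical of `G ⧸ F`. -/
def IsSecondRadical (G : Type*) [Group G] [TopologicalSpace G] (F : Subgroup G) [F.Normal]
    (F2 : Subgroup G) : Prop :=
  ∃ Fq : Subgroup (G ⧸ F), IsPronilpotentRadical (G ⧸ F) Fq ∧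
    F2 = Fq.comap (QuotientGroup.mk' F)

/-- The Frattini subgroup of a topological group: the intersection of all maximal
open subgroups. -/
def frattiniOpen (G : Type*) [Group G] [TopologicalSpace G] : Subgroup G :=
  ⨅ (M : Subgroup G) (_ : IsOpen (M : Set G) ∧ IsCoatom M), M

/-- `γ_∞(G)`: the intersection of the closures of the lower central series. -/
def gammaInf (G : Type*) [Group G] [TopologicalSpace G] [IsTopologicalGroup G] : Subgroup G :=
  ⨅ n : ℕ, (Subgroup.lowerCentralSeries (⊤ : Subgroup G) n).topologicalClosure

/-- `g` is a `p`-element: the closed subgroup it topologically generates is pro-`p`. -/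
def IsPElement {G : Type*} [Group G] [TopologicalSpace G] [IsTopologicalGroup G]
    (p : ℕ) (g : G) : Prop :=
  ∀ M : Subgroup ↥((Subgroup.closure {g}).topologicalClosure),
    M.Normal → IsOpen (M : Set ↥((Subgroup.closure {g}).topologicalClosure)) →
      ∃ k : ℕ, M.index = p ^ k

/-- `K` is the Hall `p'`-subgroup of the pronilpotent group `F`: the largest closed
subgroup normal in `F` all of whose finite quotients have order coprime to `p`. -/
def IsHallPComplement (G : Type*) [Group G] [TopologicalSpace G] (p : ℕ)
    (F K : Subgroup G) : Prop :=
  K ≤ F ∧ IsClosed (K : Set G) ∧ (K.subgroupOf F).Normal ∧ QuotientsCoprimeTo ↥K p ∧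
    ∀ K' : Subgroup G, K' ≤ F → IsClosed (K' : Set G) → (K'.subgroupOf F).Normal →
      QuotientsCoprimeTo ↥K' p → K' ≤ K
open Subgroup
namespace RadAux
variable {Q : Type*} [Group Q]

def cmap (q : Q) (K : Subgroup Q) : Subgroup Q := K.map (MulAut.conj q).toMonoidHom
lemma mem_cmap {q x : Q} {K : Subgroup Q} : x ∈ cmap q K ↔ ∃ k ∈ K, q * k * q⁻¹ = x := by
  simp [cmap, Subgroup.mem_map, MulAut.conj_apply]
lemma cmap_mem {q k : Q} {K : Subgroup Q} (hk : k ∈ K) : q * k * q⁻¹ ∈ cmap q K :=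
  mem_cmap.mpr ⟨k, hk, rfl⟩
lemma cmap_le_iff {q : Q} {K L : Subgroup Q} :
    cmap q K ≤ L ↔ ∀ k ∈ K, q * k * q⁻¹ ∈ L := by
  constructor
  · intro h k hk; exact h (cmap_mem hk)
  · rintro h x hx
    rcases mem_cmap.mp hx with ⟨k, hk, rfl⟩
    exact h k hk
def StableIn (M K : Subgroup Q) : Prop := ∀ m ∈ M, cmap m K ≤ K
lemma StableIn.conj_mem {M K : Subgroup Q} (h : StableIn M K) {m k : Q} (hm : m ∈ M)
    (hk : k ∈ K) : m * k * m⁻¹ ∈ K := h m hm (cmap_mem hk)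
lemma stableIn_commutator {M K L : Subgroup Q} (hK : StableIn M K) (hL : StableIn M L) :
    StableIn M ⁅K, L⁆ := fun m hm => by
  rw [show cmap m ⁅K, L⁆ = ⁅cmap m K, cmap m L⁆ from Subgroup.map_commutator _ _ _]
  exact Subgroup.commutator_mono (hK m hm) (hL m hm)
lemma stableIn_inf {M K L : Subgroup Q} (hK : StableIn M K) (hL : StableIn M L) :
    StableIn M (K ⊓ L) := fun m hm =>
  cmap_le_iff.mpr fun k hk => ⟨hK.conj_mem hm hk.1, hL.conj_mem hm hk.2⟩
lemma stableIn_top (M : Subgroup Q) : StableIn M (⊤ : Subgroup Q) := fun _ _ => le_top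
lemma stableIn_iSup {ι : Sort*} {M : Subgroup Q} (K : ι → Subgroup Q)
    (h : ∀ i, StableIn M (K i)) : StableIn M (⨆ i, K i) := fun m hm =>
  cmap_le_iff.mpr fun x hx => by
    refine Subgroup.iSup_induction K (C := fun y => m * y * m⁻¹ ∈ ⨆ i, K i) hx
      (fun i y hy => ?_) (by simpa using one_mem _) (fun y z hy hz => ?_)
    · exact le_iSup K i ((h i).conj_mem hm hy)
    · have : m * (y * z) * m⁻¹ = (m * y * m⁻¹) * (m * z * m⁻¹) := by group
      show m * (y * z) * m⁻¹ ∈ ⨆ i, K i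
      rw [this]; exact mul_mem hy hz

-- from s2
def commCarrier (M X L : Subgroup Q) (hL : StableIn M L) : Subgroup Q where
  carrier := {g | g ∈ M ∧ ∀ k ∈ X, ⁅g, k⁆ ∈ L}
  one_mem' := ⟨one_mem M, fun k _ => by simpa using one_mem L⟩
  mul_mem' := by
    rintro a b ⟨haM, ha⟩ ⟨hbM, hb⟩
    refine ⟨mul_mem haM hbM, fun k hk => ?_⟩
    have : ⁅a * b, k⁆ = a * ⁅b, k⁆ * a⁻¹ * ⁅a, k⁆ := by
      simp only [commutatorElement_def]; group
    rw [this]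
    exact mul_mem (hL.conj_mem haM (hb k hk)) (ha k hk)
  inv_mem' := by
    rintro a ⟨haM, ha⟩
    refine ⟨inv_mem haM, fun k hk => ?_⟩
    have : ⁅a⁻¹, k⁆ = a⁻¹ * ⁅a, k⁆⁻¹ * a⁻¹⁻¹ := by
      simp only [commutatorElement_def]; group
    rw [this]
    exact hL.conj_mem (inv_mem haM) (inv_mem (ha k hk))
lemma commutator_iSup_left {ι : Sort*} (K : ι → Subgroup Q) (X L M : Subgroup Q)
    (hL : StableIn M L) (hKM : ∀ i, K i ≤ M) (h : ∀ i, ⁅K i, X⁆ ≤ L) :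
    ⁅⨆ i, K i, X⁆ ≤ L := by
  have hsub : (⨆ i, K i) ≤ commCarrier M X L hL := by
    refine iSup_le fun i => fun g hg => ?_
    exact ⟨hKM i hg, fun k hk => h i (Subgroup.commutator_mem_commutator hg hk)⟩
  exact Subgroup.commutator_le.mpr fun g hg k hk => (hsub hg).2 k hk
lemma commutator_sup_right {K₁ K₂ X L M : Subgroup Q}
    (hL : StableIn M L) (h1M : K₁ ≤ M) (h2M : K₂ ≤ M)
    (h1 : ⁅X, K₁⁆ ≤ L) (h2 : ⁅X, K₂⁆ ≤ L) : ⁅X, K₁ ⊔ K₂⁆ ≤ L := by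
  rw [Subgroup.commutator_comm]
  rw [Subgroup.commutator_comm] at h1 h2
  have : K₁ ⊔ K₂ = ⨆ b : Bool, (if b then K₁ else K₂) := by rw [iSup_bool_eq]; simp
  rw [this]
  refine commutator_iSup_left _ X L M hL (fun b => ?_) (fun b => ?_) <;> cases b <;> simpa
lemma commutator_le_right_of_stable {M X A : Subgroup Q} (hA : StableIn M A) (hX : X ≤ M) :
    ⁅X, A⁆ ≤ A := by
  refine Subgroup.commutator_le.mpr fun g hg a ha => ?_
  have : ⁅g, a⁆ = (g * a * g⁻¹) * a⁻¹ := by simp [commutatorElement_def, mul_assoc]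
  rw [this]
  exact mul_mem (hA.conj_mem (hX hg) ha) (inv_mem ha)
lemma commutator_le_left_of_stable {M X A : Subgroup Q} (hA : StableIn M A) (hX : X ≤ M) :
    ⁅A, X⁆ ≤ A := by
  rw [Subgroup.commutator_comm]; exact commutator_le_right_of_stable hA hX

-- from s3
def gSeries (A : Subgroup Q) : ℕ → Subgroup Q
  | 0 => A
  | n + 1 => ⁅gSeries A n, A⁆
lemma gSeries_map_eq (A : Subgroup Q) (n : ℕ) :
    (Subgroup.lowerCentralSeries (⊤ : Subgroup ↥A) n).map A.subtype = gSeries A n := by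
  induction n with
  | zero =>
      simp only [Subgroup.lowerCentralSeries_zero, gSeries]
      rw [← MonoidHom.range_eq_map, Subgroup.range_subtype]
  | succ n ih =>
      have h1 : Subgroup.lowerCentralSeries (⊤ : Subgroup ↥A) (n + 1) = ⁅Subgroup.lowerCentralSeries (⊤ : Subgroup ↥A) n, (⊤ : Subgroup ↥A)⁆ :=
        rfl
      rw [h1, gSeries, Subgroup.map_commutator, ih, ← MonoidHom.range_eq_map,
        Subgroup.range_subtype]
lemma gSeries_eq_bot_of_isNilpotent (A : Subgroup Q) (h : Group.IsNilpotent ↥A) :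
    ∃ n, gSeries A n = ⊥ := by
  obtain ⟨n, hn⟩ := Subgroup.nilpotent_iff_lowerCentralSeries.mp h
  exact ⟨n, by rw [← gSeries_map_eq, hn]; simp⟩
lemma isNilpotent_of_gSeries_eq_bot (A : Subgroup Q) (n : ℕ) (h : gSeries A n = ⊥) :
    Group.IsNilpotent ↥A := by
  rw [Subgroup.nilpotent_iff_finite_descending_central_series]
  refine ⟨n, fun i => (gSeries A i).subgroupOf A, ⟨?_, ?_⟩, ?_⟩
  · simp [gSeries, Subgroup.subgroupOf_self]
  · intro x i hx g
    have hmem : ((x : Q) * g * (x : Q)⁻¹ * (g : Q)⁻¹) ∈ gSeries A (i + 1) :=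
      Subgroup.commutator_mem_commutator hx g.2
    simpa [Subgroup.mem_subgroupOf, commutatorElement_def] using hmem
  · show (gSeries A n).subgroupOf A = ⊥
    rw [h]
    ext x
    simp [Subgroup.mem_subgroupOf]

-- new material
lemma gSeries_stableIn {M A : Subgroup Q} (hA : StableIn M A) (n : ℕ) :
    StableIn M (gSeries A n) := by
  induction n with
  | zero => exact hA
  | succ n ih => exact stableIn_commutator ih hA

lemma gSeries_le {M A : Subgroup Q} (hA : StableIn M A) (hAM : A ≤ M) (n : ℕ) :
    gSeries A n ≤ A := by
  induction n with
  | zero => exact le_rfl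
  | succ n ih =>
      show (⁅gSeries A n, A⁆ : Subgroup Q) ≤ A
      exact (Subgroup.commutator_mono ih le_rfl).trans (commutator_le_left_of_stable hA hAM)

lemma gSeries_eq_bot_mono {A : Subgroup Q} {a : ℕ} (h : gSeries A a = ⊥) {k : ℕ} (hk : a ≤ k) :
    gSeries A k = ⊥ := by
  induction k with
  | zero => exact le_antisymm (Nat.le_zero.mp hk ▸ h ▸ le_rfl) bot_le
  | succ k ih =>
      rcases Nat.lt_or_ge a (k+1) with hlt | hge
      · have := ih (by omega)
        rw [gSeries, this, Subgroup.commutator_bot_left]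
      · have : a = k + 1 := by omega
        rw [← this]; exact h

/-- `ext` component -/
def extS (A : Subgroup Q) : ℕ → Subgroup Q
  | 0 => ⊤
  | i + 1 => gSeries A i

def mixU (A B : Subgroup Q) (i j : ℕ) : Subgroup Q := extS A i ⊓ extS B j

def mixT (A B : Subgroup Q) (n : ℕ) : Subgroup Q :=
  ⨆ i : Fin (n + 2), mixU A B i (n + 1 - (i : ℕ))

section Fitting
variable {M A B : Subgroup Q} (hA : StableIn M A) (hB : StableIn M B)
  (hAM : A ≤ M) (hBM : B ≤ M)

include hA in
lemma extS_stableIn (i : ℕ) : StableIn M (extS A i) := by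
  cases i with
  | zero => exact stableIn_top M
  | succ i => exact gSeries_stableIn hA i

include hA hB in
lemma mixU_stableIn (i j : ℕ) : StableIn M (mixU A B i j) :=
  stableIn_inf (extS_stableIn hA i) (extS_stableIn hB j)

include hA hB hAM hBM in
lemma mixU_le_M {i j : ℕ} (hij : 1 ≤ i + j) : mixU A B i j ≤ M := by
  cases i with
  | zero =>
      cases j with
      | zero => omega
      | succ j => exact inf_le_right.trans ((gSeries_le hB hBM j).trans hBM)
  | succ i => exact inf_le_left.trans ((gSeries_le hA hAM i).trans hAM)

include hA hB in
lemma mixT_stableIn (n : ℕ) : StableIn M (mixT A B n) :=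
  stableIn_iSup _ fun i => mixU_stableIn hA hB _ _

include hA hB hAM hBM in
lemma comm_mixU_A {i j : ℕ} (hij : 1 ≤ i + j) : ⁅mixU A B i j, A⁆ ≤ mixU A B (i + 1) j := by
  refine le_inf ?_ ?_
  · cases i with
    | zero =>
        exact (Subgroup.commutator_mono (mixU_le_M hA hB hAM hBM hij) le_rfl).trans
          (commutator_le_right_of_stable hA le_rfl)
    | succ i =>
        exact Subgroup.commutator_mono inf_le_left le_rfl
  · cases j with
    | zero => exact le_top
    | succ j =>
        exact (Subgroup.commutator_mono inf_le_right le_rfl).trans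
          (commutator_le_left_of_stable (gSeries_stableIn hB j) hAM)

include hA hB hAM hBM in
lemma comm_mixU_B {i j : ℕ} (hij : 1 ≤ i + j) : ⁅mixU A B i j, B⁆ ≤ mixU A B i (j + 1) := by
  have := comm_mixU_A hB hA hBM hAM (i := j) (j := i) (by omega)
  rw [show mixU B A j i = mixU A B i j by rw [mixU, mixU, inf_comm],
    show mixU B A (j+1) i = mixU A B i (j+1) by rw [mixU, mixU, inf_comm]] at this
  exact this

include hA hB hAM hBM in
lemma gSeries_sup_le_mixT (n : ℕ) : gSeries (A ⊔ B) n ≤ mixT A B n := by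
  induction n with
  | zero =>
      refine sup_le ?_ ?_
      · have h1 : mixU A B 1 0 ≤ mixT A B 0 := by
          have := le_iSup (fun i : Fin 2 => mixU A B i (1 - (i : ℕ))) ⟨1, by omega⟩
          exact this
        refine le_trans ?_ h1
        exact le_inf le_rfl le_top
      · have h1 : mixU A B 0 1 ≤ mixT A B 0 := by
          have := le_iSup (fun i : Fin 2 => mixU A B i (1 - (i : ℕ))) ⟨0, by omega⟩
          exact this
        refine le_trans ?_ h1
        exact le_inf le_top le_rfl
  | succ n ih =>
      rw [gSeries]
      refine le_trans (Subgroup.commutator_mono ih le_rfl) ?_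
      refine commutator_sup_right (mixT_stableIn hA hB (n+1)) hAM hBM ?_ ?_
      · rw [mixT]
        rw [show (⁅⨆ i : Fin (n+2), mixU A B i (n + 1 - (i:ℕ)), A⁆ : Subgroup Q)
            = ⁅⨆ i : Fin (n+2), mixU A B i (n + 1 - (i:ℕ)), A⁆ from rfl]
        refine commutator_iSup_left _ A (mixT A B (n+1)) M (mixT_stableIn hA hB (n+1))
          (fun i => mixU_le_M hA hB hAM hBM (by omega)) (fun i => ?_)
        refine le_trans (comm_mixU_A hA hB hAM hBM (by omega)) ?_
        have h1 := le_iSup (fun k : Fin (n+3) => mixU A B k (n + 2 - (k : ℕ)))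
          ⟨(i : ℕ) + 1, by omega⟩
        have h2 : mixU A B ((i:ℕ)+1) (n + 2 - ((i:ℕ)+1)) = mixU A B ((i:ℕ)+1) (n + 1 - (i:ℕ)) := by
          congr 1
          omega
        rw [h2] at h1
        exact h1
      · rw [mixT]
        refine commutator_iSup_left _ B (mixT A B (n+1)) M (mixT_stableIn hA hB (n+1))
          (fun i => mixU_le_M hA hB hAM hBM (by omega)) (fun i => ?_)
        refine le_trans (comm_mixU_B hA hB hAM hBM (by omega)) ?_
        rcases Nat.lt_or_ge (i : ℕ) (n + 2) with hi | hi
        · have h1 := le_iSup (fun k : Fin (n+3) => mixU A B k (n + 2 - (k : ℕ)))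
            ⟨(i : ℕ), by omega⟩
          have h2 : mixU A B (i:ℕ) (n + 2 - (i:ℕ)) = mixU A B (i:ℕ) ((n + 1 - (i:ℕ)) + 1) := by
            congr 1
            omega
          rw [h2] at h1
          exact h1
        · omega

include hA hB hAM hBM in
theorem isNilpotent_sup_of_stable (hAnil : Group.IsNilpotent ↥A) (hBnil : Group.IsNilpotent ↥B) :
    Group.IsNilpotent ↥(A ⊔ B) := by
  obtain ⟨a, ha⟩ := gSeries_eq_bot_of_isNilpotent A hAnil
  obtain ⟨b, hb⟩ := gSeries_eq_bot_of_isNilpotent B hBnil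
  refine isNilpotent_of_gSeries_eq_bot _ (a + b) (le_antisymm ?_ bot_le)
  refine le_trans (gSeries_sup_le_mixT hA hB hAM hBM (a+b)) ?_
  refine iSup_le fun i => ?_
  rcases Nat.lt_or_ge (i : ℕ) (a + 1) with hi | hi
  · have hj : b ≤ (a + b + 1 - (i : ℕ)) - 1 := by omega
    have : extS B (a + b + 1 - (i : ℕ)) = ⊥ := by
      have h0 : 1 ≤ a + b + 1 - (i : ℕ) := by omega
      obtain ⟨j, hjj⟩ : ∃ j, a + b + 1 - (i : ℕ) = j + 1 := ⟨a + b - (i:ℕ), by omega⟩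
      rw [hjj, extS]
      exact gSeries_eq_bot_mono hb (by omega)
    exact le_trans inf_le_right (this ▸ le_rfl)
  · have : extS A (i : ℕ) = ⊥ := by
      obtain ⟨k, hk⟩ : ∃ k, (i : ℕ) = k + 1 := ⟨(i:ℕ) - 1, by omega⟩
      rw [hk, extS]
      exact gSeries_eq_bot_mono ha (by omega)
    exact le_trans inf_le_left (this ▸ le_rfl)

end Fitting
end RadAux

namespace RadAux
variable {Q : Type*} [Group Q]

def NormalIn (M K : Subgroup Q) : Prop := K ≤ M ∧ StableIn M K

lemma normalIn_self (M : Subgroup Q) : NormalIn M M :=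
  ⟨le_rfl, fun m hm => cmap_le_iff.mpr fun k hk => mul_mem (mul_mem hm hk) (inv_mem hm)⟩

lemma normalIn_sup {M A B : Subgroup Q} (hA : NormalIn M A) (hB : NormalIn M B) :
    NormalIn M (A ⊔ B) := by
  refine ⟨sup_le hA.1 hB.1, fun m hm => ?_⟩
  rw [show cmap m (A ⊔ B) = cmap m A ⊔ cmap m B from Subgroup.map_sup _ _ _]
  exact sup_le ((hA.2 m hm).trans le_sup_left) ((hB.2 m hm).trans le_sup_right)

theorem isNilpotent_sup_of_normalIn {M A B : Subgroup Q} (hA : NormalIn M A) (hB : NormalIn M B)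
    (hAnil : Group.IsNilpotent ↥A) (hBnil : Group.IsNilpotent ↥B) :
    Group.IsNilpotent ↥(A ⊔ B) :=
  isNilpotent_sup_of_stable hA.2 hB.2 hA.1 hB.1 hAnil hBnil

/-- The relative Fitting subgroup: join of all nilpotent subgroups of `M` normalized by `M`. -/
def FitIn (M : Subgroup Q) : Subgroup Q :=
  ⨆ (K : {K : Subgroup Q // NormalIn M K ∧ Group.IsNilpotent ↥K}), (K : Subgroup Q)

lemma le_fitIn {M K : Subgroup Q} (h1 : NormalIn M K) (h2 : Group.IsNilpotent ↥K) :
    K ≤ FitIn M :=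
  le_iSup (fun K : {K : Subgroup Q // NormalIn M K ∧ Group.IsNilpotent ↥K} =>
    (K : Subgroup Q)) ⟨K, h1, h2⟩

lemma fitIn_le (M : Subgroup Q) : FitIn M ≤ M :=
  iSup_le fun K => K.2.1.1

lemma cmap_cmap (q r : Q) (K : Subgroup Q) : cmap q (cmap r K) = cmap (q * r) K := by
  rw [cmap, cmap, cmap, Subgroup.map_map]
  congr 1
  ext x
  simp [MulAut.conj_apply, mul_assoc]

lemma cmap_nilpotent {q : Q} {K : Subgroup Q} (h : Group.IsNilpotent ↥K) :
    Group.IsNilpotent ↥(cmap q K) := by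
  have e := Subgroup.equivMapOfInjective K (MulAut.conj q).toMonoidHom
    (MulAut.conj q).injective
  exact @nilpotent_of_mulEquiv _ _ _ _ h e

lemma cmap_mono {q : Q} {K L : Subgroup Q} (h : K ≤ L) : cmap q K ≤ cmap q L :=
  Subgroup.map_mono h

lemma cmap_eq_of_stable {M K : Subgroup Q} (h : StableIn M K) {m : Q} (hm : m ∈ M) :
    cmap m K = K := by
  refine le_antisymm (h m hm) ?_
  intro k hk
  have h1 : m * (m⁻¹ * k * m⁻¹⁻¹) * m⁻¹ ∈ cmap m K :=
    cmap_mem (h m⁻¹ (inv_mem hm) (cmap_mem hk))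
  simpa [mul_assoc] using h1

/-- conjugation by an element normalizing `M` preserves `FitIn M`. -/
lemma fitIn_stable_of_cmap_eq {M : Subgroup Q} {q : Q} (hq : cmap q M = M)
    (hq' : cmap q⁻¹ M = M) : cmap q (FitIn M) ≤ FitIn M := by
  rw [cmap_le_iff]
  intro x hx
  refine Subgroup.iSup_induction _ (C := fun y => q * y * q⁻¹ ∈ FitIn M) hx
    (fun K y hy => ?_) (by simpa using one_mem _) (fun y z hy hz => ?_)
  · have hK : NormalIn M (cmap q (K : Subgroup Q)) := by
      constructor
      · exact le_trans (cmap_mono K.2.1.1) (le_of_eq hq)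
      · intro m hm
        rw [cmap_cmap, cmap_le_iff]
        intro k hk
        have hm' : q⁻¹ * m * q ∈ M := by
          have h0 := cmap_mem (q := q⁻¹) hm
          rw [hq'] at h0
          simpa using h0
        have h2 : (q⁻¹ * m * q) * k * (q⁻¹ * m * q)⁻¹ ∈ (K : Subgroup Q) :=
          K.2.1.2.conj_mem hm' hk
        have h3 : q * ((q⁻¹ * m * q) * k * (q⁻¹ * m * q)⁻¹) * q⁻¹
            = (m * q) * k * (m * q)⁻¹ := by group
        rw [← h3]
        exact cmap_mem h2
    have : q * y * q⁻¹ ∈ cmap q (K : Subgroup Q) := cmap_mem hy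
    exact le_fitIn hK (cmap_nilpotent K.2.2) this
  · show q * (y * z) * q⁻¹ ∈ FitIn M
    have : q * (y * z) * q⁻¹ = (q * y * q⁻¹) * (q * z * q⁻¹) := by group
    rw [this]; exact mul_mem hy hz

lemma fitIn_normalIn (M : Subgroup Q) : NormalIn M (FitIn M) := by
  refine ⟨fitIn_le M, fun m hm => ?_⟩
  exact fitIn_stable_of_cmap_eq (cmap_eq_of_stable (normalIn_self M).2 hm)
    (cmap_eq_of_stable (normalIn_self M).2 (inv_mem hm))

open scoped Classical in
lemma fitIn_nilpotent [Finite Q] (M : Subgroup Q) : Group.IsNilpotent ↥(FitIn M) := by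
  classical
  have : Finite (Subgroup Q) := by
    have : Finite (Set Q) := inferInstance
    exact Finite.of_injective (fun K : Subgroup Q => (K : Set Q)) SetLike.coe_injective
  have : Fintype (Subgroup Q) := Fintype.ofFinite _
  set f : Subgroup Q → Subgroup Q :=
    fun K => if NormalIn M K ∧ Group.IsNilpotent ↥K then K else ⊥ with hf
  have heq : FitIn M = Finset.univ.sup f := by
    apply le_antisymm
    · refine iSup_le fun K => ?_
      have : f K.1 = K.1 := by rw [hf]; simp [K.2]
      rw [← this]
      exact Finset.le_sup (Finset.mem_univ K.1)
    · refine Finset.sup_le fun K _ => ?_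
      rw [hf]
      by_cases h : NormalIn M K ∧ Group.IsNilpotent ↥K
      · simpa [h] using le_fitIn h.1 h.2
      · simp [h]
  have hp : NormalIn M (Finset.univ.sup f) ∧ Group.IsNilpotent ↥(Finset.univ.sup f) := by
    refine Finset.sup_induction
      (p := fun L : Subgroup Q => NormalIn M L ∧ Group.IsNilpotent ↥L) ?_ ?_ ?_
    · refine ⟨⟨bot_le, fun m _ => ?_⟩, ?_⟩
      · rw [cmap_le_iff]; simp
      · exact Group.isNilpotent_of_subsingleton
    · intro a ha b hb
      exact ⟨normalIn_sup ha.1 hb.1, isNilpotent_sup_of_normalIn ha.1 hb.1 ha.2 hb.2⟩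
    · intro K _
      rw [hf]
      beta_reduce
      by_cases h : NormalIn M K ∧ Group.IsNilpotent ↥K
      · rw [if_pos h]; exact h
      · rw [if_neg h]
        exact ⟨⟨bot_le, fun m _ => by rw [cmap_le_iff]; simp⟩, Group.isNilpotent_of_subsingleton⟩
  rw [heq]
  exact hp.2

/-- nilpotent + subnormal chain of length `n` implies contained in the Fitting subgroup of the
top of the chain. -/
lemma chain_le_fitIn [Finite Q] :
    ∀ (n : ℕ) (c : ℕ → Subgroup Q), Group.IsNilpotent ↥(c 0) →
      (∀ i < n, NormalIn (c (i + 1)) (c i)) → c 0 ≤ FitIn (c n) := by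
  intro n
  induction n with
  | zero => intro c h _; exact le_fitIn (normalIn_self _) h
  | succ n ih =>
      intro c h hc
      have h1 : c 0 ≤ FitIn (c n) := ih c h (fun i hi => hc i (by omega))
      refine h1.trans (le_fitIn ?_ (fitIn_nilpotent _))
      have hcn : NormalIn (c (n+1)) (c n) := hc n (by omega)
      refine ⟨(fitIn_le _).trans hcn.1, fun m hm => ?_⟩
      have hmeq : cmap m (c n) = c n := cmap_eq_of_stable hcn.2 hm
      have hmeq' : cmap m⁻¹ (c n) = c n := cmap_eq_of_stable hcn.2 (inv_mem hm)
      exact fitIn_stable_of_cmap_eq hmeq hmeq'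

end RadAux

namespace RadAux
variable {Q : Type*} [Group Q]

lemma stableIn_sup' {M K L : Subgroup Q} (hK : StableIn M K) (hL : StableIn M L) :
    StableIn M (K ⊔ L) := fun m hm => by
  rw [show cmap m (K ⊔ L) = cmap m K ⊔ cmap m L from Subgroup.map_sup _ _ _]
  exact sup_le ((hK m hm).trans le_sup_left) ((hL m hm).trans le_sup_right)

lemma normal_stableIn {K : Subgroup Q} (h : K.Normal) (M : Subgroup Q) : StableIn M K :=
  fun m _ => cmap_le_iff.mpr fun k hk => h.conj_mem k hk m

lemma cmap_one (K : Subgroup Q) : cmap 1 K = K := by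
  ext x; simp [mem_cmap]

lemma cmap_eq_of_conj_le {K : Subgroup Q} {x : Q} (h1 : cmap x K ≤ K) (h2 : cmap x⁻¹ K ≤ K) :
    cmap x K = K := by
  refine le_antisymm h1 ?_
  intro y hy
  have h3 : x * (x⁻¹ * y * x⁻¹⁻¹) * x⁻¹ ∈ cmap x K := cmap_mem (h2 (cmap_mem hy))
  simpa [mul_assoc] using h3

lemma mem_normalizer_of_cmap_eq {K : Subgroup Q} {x : Q} (h : cmap x K = K) :
    x ∈ Subgroup.normalizer (K : Set Q) := by
  have hinv : cmap x⁻¹ K = K := by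
    have := congrArg (cmap x⁻¹) h
    rw [cmap_cmap, inv_mul_cancel, cmap_one] at this
    exact this.symm
  rw [Subgroup.mem_normalizer_iff]
  intro y
  constructor
  · intro hy; rw [← h]; exact cmap_mem hy
  · intro hy
    have := cmap_mem (q := x⁻¹) hy
    rw [hinv] at this
    simpa [mul_assoc] using this

lemma gSeries_succ_le {A : Subgroup Q} (hA : StableIn ⊤ A) (k : ℕ) :
    gSeries A (k + 1) ≤ gSeries A k :=
  commutator_le_left_of_stable (gSeries_stableIn hA k) le_top

lemma gSeries_map {Q₂ : Type*} [Group Q₂] (f : Q →* Q₂) (A : Subgroup Q) (n : ℕ) :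
    (gSeries A n).map f = gSeries (A.map f) n := by
  induction n with
  | zero => rfl
  | succ n ih =>
      show (⁅gSeries A n, A⁆ : Subgroup Q).map f = ⁅gSeries (A.map f) n, A.map f⁆
      rw [Subgroup.map_commutator, ih]

lemma key_finite [Finite Q] (C W Hb Kb : Subgroup Q)
    (hC : C.Normal)
    (hCnil : Group.IsNilpotent ↥C)
    (hW : W.Normal)
    (hCH : C ≤ Hb) (hHW : Hb ≤ W)
    (hKH : Kb ≤ Hb) (hKnorm : ∀ h ∈ Hb, ∀ k ∈ Kb, h * k * h⁻¹ ∈ Kb)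
    (hKnil : Group.IsNilpotent ↥Kb)
    (n : ℕ) (hWC : gSeries W n ≤ C) :
    Kb ≤ FitIn (⊤ : Subgroup Q) := by
  classical
  set R := Kb ⊔ C with hR
  have hKnormIn : NormalIn Hb Kb := ⟨hKH, fun m hm => cmap_le_iff.mpr (hKnorm m hm)⟩
  have hCnormIn : NormalIn Hb C := ⟨hCH, normal_stableIn hC Hb⟩
  have hRnil : Group.IsNilpotent ↥R := isNilpotent_sup_of_normalIn hKnormIn hCnormIn hKnil hCnil
  have hRH : R ≤ Hb := sup_le hKH hCH
  have hRW : R ≤ W := hRH.trans hHW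
  have hRstable : StableIn Hb R := stableIn_sup' hKnormIn.2 hCnormIn.2
  have hWtop : StableIn ⊤ W := normal_stableIn hW ⊤
  have hgWstable : ∀ k, StableIn ⊤ (gSeries W k) := fun k => gSeries_stableIn hWtop k
  set c : ℕ → Subgroup Q := fun i => if i ≤ n then R ⊔ gSeries W (n - i) else ⊤ with hc
  have hci : ∀ i, i ≤ n → c i = R ⊔ gSeries W (n - i) := fun i hi => if_pos hi
  have hc0 : c 0 = R := by
    rw [hci 0 (Nat.zero_le n), Nat.sub_zero]
    exact sup_eq_left.mpr (hWC.trans le_sup_right)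
  have hcn : c n = W := by
    rw [hci n le_rfl, Nat.sub_self]
    exact sup_eq_right.mpr hRW
  have hctop : c (n + 1) = ⊤ := if_neg (by omega)
  -- stability of intermediate terms under Hb-conjugation and more
  have hcistable : ∀ i, StableIn Hb (R ⊔ gSeries W (n - i)) := fun i =>
    stableIn_sup' hRstable (fun m _ => hgWstable (n - i) m trivial)
  have hchain : ∀ i, i < n + 1 → NormalIn (c (i + 1)) (c i) := by
    intro i hi
    rcases Nat.lt_or_ge i n with hlt | hge
    · -- i < n
      have hip : i + 1 ≤ n := by omega
      have e1 : c i = R ⊔ gSeries W (n - i) := hci i (by omega)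
      have e2 : c (i + 1) = R ⊔ gSeries W (n - i - 1) := by
        have := hci (i + 1) hip
        rwa [show n - (i + 1) = n - i - 1 by omega] at this
      have hsub : gSeries W (n - i) ≤ gSeries W (n - i - 1) := by
        have : n - i = (n - i - 1) + 1 := by omega
        rw [this]
        exact gSeries_succ_le hWtop _
      constructor
      · rw [e1, e2]
        exact sup_le le_sup_left (hsub.trans le_sup_right)
      · -- conjugation stability
        have hnormalizer : c (i + 1) ≤ Subgroup.normalizer (c i : Set Q) := by
          rw [e2]
          refine sup_le ?_ ?_
          · intro r hr
            refine mem_normalizer_of_cmap_eq ?_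
            rw [e1]
            exact cmap_eq_of_stable (hcistable i) (hRH hr)
          · intro x hx
            have hconj : ∀ y ∈ gSeries W (n - i - 1), cmap y (c i) ≤ c i := by
              intro y hy
              rw [e1]
              rw [show cmap y (R ⊔ gSeries W (n - i)) =
                cmap y R ⊔ cmap y (gSeries W (n - i)) from Subgroup.map_sup _ _ _]
              refine sup_le ?_ ((hgWstable (n - i) y trivial).trans le_sup_right)
              rw [cmap_le_iff]
              intro r hrR
              have hcomm : ⁅y, r⁆ ∈ gSeries W (n - i) := by
                have : n - i = (n - i - 1) + 1 := by omega
                rw [this, gSeries]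
                exact Subgroup.commutator_mem_commutator hy (hRW hrR)
              have : y * r * y⁻¹ = ⁅y, r⁆ * r := by
                simp [commutatorElement_def, mul_assoc]
              rw [this]
              exact mul_mem (Subgroup.mem_sup_right hcomm) (Subgroup.mem_sup_left hrR)
            exact mem_normalizer_of_cmap_eq
              (cmap_eq_of_conj_le (hconj x hx) (hconj x⁻¹ (inv_mem hx)))
        intro m hm
        rw [cmap_le_iff]
        intro k hk
        exact (Subgroup.mem_normalizer_iff.mp (hnormalizer hm) k).mp hk
    · -- i = n
      have : i = n := by omega
      subst this
      rw [hctop, hcn]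
      exact ⟨le_top, normal_stableIn hW ⊤⟩
  have := chain_le_fitIn (n + 1) c (by rw [hc0]; exact hRnil) hchain
  rw [hc0, hctop] at this
  exact le_sup_left.trans this

end RadAux


namespace RadAux

lemma fitIn_top_normal {Q : Type*} [Group Q] : (FitIn (⊤ : Subgroup Q)).Normal := by
  constructor
  intro x hx g
  exact (fitIn_normalIn (⊤ : Subgroup Q)).2 g trivial (cmap_mem hx)

lemma nilpotent_of_le {Q : Type*} [Group Q] {S T : Subgroup Q} (h : S ≤ T)
    (hT : Group.IsNilpotent ↥T) : Group.IsNilpotent ↥S := by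
  haveI := hT
  exact nilpotent_of_mulEquiv (Subgroup.subgroupOfEquivOfLe h)

lemma nilpotent_range_of_isPronilpotent {A Q' : Type*} [Group A] [TopologicalSpace A] [Group Q']
    (h : IsPronilpotent A) (φ : A →* Q') (hker : IsOpen ((φ.ker : Set A))) :
    Group.IsNilpotent ↥φ.range := by
  have hn : Group.IsNilpotent (A ⧸ φ.ker) := h φ.ker inferInstance hker
  haveI := hn
  exact nilpotent_of_mulEquiv (QuotientGroup.quotientKerEquivRange φ)

lemma isPronilpotent_of_mulEquiv {A B : Type*} [Group A] [TopologicalSpace A] [Group B]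
    [TopologicalSpace B] (e : A ≃* B) (he : Continuous e) (h : IsPronilpotent A) :
    IsPronilpotent B := by
  intro N hN hNopen
  haveI := hN
  haveI hN' : (N.comap e.toMonoidHom).Normal := hN.comap e.toMonoidHom
  have hopen : IsOpen ((N.comap e.toMonoidHom : Subgroup A) : Set A) := hNopen.preimage he
  have h1 := h _ hN' hopen
  haveI := h1
  exact nilpotent_of_mulEquiv
    (QuotientGroup.congr (N.comap e.toMonoidHom) N e
      (Subgroup.map_comap_eq_self_of_surjective e.surjective N))

end RadAux

open RadAux in
theorem radical_of_subgroup_between_F_and_F2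
    (G : Type) [Group G] [TopologicalSpace G] [IsTopologicalGroup G]
    [CompactSpace G] [T2Space G] [TotallyDisconnectedSpace G]
    (F F2 H : Subgroup G) [F.Normal]
    (hF : IsPronilpotentRadical G F) (hF2 : IsSecondRadical G F F2)
    (hH : IsClosed (H : Set G)) (hFH : F ≤ H) (hHF2 : H ≤ F2) :
    IsPronilpotentRadical ↥H (F.subgroupOf H) := by
  obtain ⟨hFclosed, hFnormal, hFpro, hFmax⟩ := hF
  obtain ⟨Fq, hFq, hF2eq⟩ := hF2
  haveI hF2normal : F2.Normal := by
    rw [hF2eq]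
    exact hFq.2.1.comap _
  -- Part 1: closedness
  have hclosed : IsClosed ((F.subgroupOf H : Subgroup ↥H) : Set ↥H) := by
    have hset : ((F.subgroupOf H : Subgroup ↥H) : Set ↥H) = Subtype.val ⁻¹' (F : Set G) := by
      ext x
      simp [Subgroup.mem_subgroupOf]
    rw [hset]
    exact hFclosed.preimage continuous_subtype_val
  -- Part 2: normality
  have hnormal : (F.subgroupOf H).Normal := Subgroup.normal_subgroupOf
  -- Part 3: pronilpotency
  have hpron : IsPronilpotent ↥(F.subgroupOf H) := by
    refine isPronilpotent_of_mulEquiv (Subgroup.subgroupOfEquivOfLe hFH).symm ?_ hFpro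
    exact Continuous.subtype_mk (Continuous.subtype_mk continuous_subtype_val _) _
  refine ⟨hclosed, hnormal, hpron, ?_⟩
  -- Part 4: maximality
  intro K hKclosed hKnormal hKpro
  -- The key finite-quotient fact:
  have hKmapFit : ∀ (N : Subgroup G) (hN : N.Normal), IsOpen (N : Set G) →
      ∀ x : ↥H, x ∈ K →
        (haveI := hN; QuotientGroup.mk' N ((x : ↥H) : G) ∈ FitIn (⊤ : Subgroup (G ⧸ N))) := by
    intro N hN hNo x hxK
    haveI := hN
    haveI hQfin : Finite (G ⧸ N) := N.quotient_finite_of_isOpen hNo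
    set π : G →* G ⧸ N := QuotientGroup.mk' N with hπ
    set C : Subgroup (G ⧸ N) := F.map π with hCdef
    set Wb : Subgroup (G ⧸ N) := F2.map π with hWdef
    set Hb : Subgroup (G ⧸ N) := H.map π with hHdef
    set φK : ↥K →* G ⧸ N := π.comp (H.subtype.comp K.subtype) with hφKdef
    set Kb : Subgroup (G ⧸ N) := φK.range with hKbdef
    have hπsurj : Function.Surjective π := QuotientGroup.mk'_surjective N
    haveI hCnormal : C.Normal := hFnormal.map π hπsurj
    haveI hWnormal : Wb.Normal := hF2normal.map π hπsurj
    have hCnil : Group.IsNilpotent ↥C := by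
      have hCr : C = (π.comp F.subtype).range := by
        rw [MonoidHom.range_comp, Subgroup.range_subtype]
      rw [hCr]
      refine nilpotent_range_of_isPronilpotent hFpro _ ?_
      have hker : (((π.comp F.subtype).ker : Subgroup ↥F) : Set ↥F)
          = Subtype.val ⁻¹' (N : Set G) := by
        ext y
        simp [MonoidHom.mem_ker, hπ, QuotientGroup.eq_one_iff]
      rw [hker]
      exact hNo.preimage continuous_subtype_val
    have hKnil : Group.IsNilpotent ↥Kb := by
      refine nilpotent_range_of_isPronilpotent hKpro φK ?_
      have hker : ((φK.ker : Subgroup ↥K) : Set ↥K)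
          = (fun k : ↥K => ((k : ↥H) : G)) ⁻¹' (N : Set G) := by
        ext y
        simp [MonoidHom.mem_ker, hφKdef, hπ, QuotientGroup.eq_one_iff]
      rw [hker]
      exact hNo.preimage (continuous_subtype_val.comp continuous_subtype_val)
    have hCH : C ≤ Hb := Subgroup.map_mono hFH
    have hHW : Hb ≤ Wb := Subgroup.map_mono hHF2
    have hKH : Kb ≤ Hb := by
      rintro y ⟨k, rfl⟩
      exact ⟨((k : ↥H) : G), (k : ↥H).2, rfl⟩
    have hKnorm : ∀ h ∈ Hb, ∀ k ∈ Kb, h * k * h⁻¹ ∈ Kb := by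
      intro hh hmem kk kmem
      obtain ⟨h0, h0H, rfl⟩ := Subgroup.mem_map.mp hmem
      obtain ⟨k0, rfl⟩ := kmem
      have hc : (⟨h0, h0H⟩ : ↥H) * ((k0 : ↥H)) * (⟨h0, h0H⟩ : ↥H)⁻¹ ∈ K :=
        hKnormal.conj_mem _ k0.2 _
      refine ⟨⟨_, hc⟩, ?_⟩
      show π ((((⟨h0, h0H⟩ : ↥H) * ((k0 : ↥H)) * (⟨h0, h0H⟩ : ↥H)⁻¹ : ↥H)) : G)
        = π h0 * φK k0 * (π h0)⁻¹
      have hcoe : (((⟨h0, h0H⟩ : ↥H) * ((k0 : ↥H)) * (⟨h0, h0H⟩ : ↥H)⁻¹ : ↥H) : G)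
          = h0 * (((k0 : ↥H)) : G) * h0⁻¹ := by
        push_cast
        rfl
      rw [hcoe, map_mul, map_mul, map_inv]
      rfl
    -- nilpotency of Wb modulo C
    haveI : Finite ((G ⧸ N) ⧸ C) := Quotient.finite _
    set σ : (G ⧸ N) →* (G ⧸ N) ⧸ C := QuotientGroup.mk' C with hσ
    set α : G →* (G ⧸ N) ⧸ C := σ.comp π with hα
    have hFα : F ≤ α.ker := by
      intro y hy
      have : π y ∈ C := Subgroup.mem_map_of_mem π hy
      simpa [hα, MonoidHom.mem_ker, hσ, QuotientGroup.eq_one_iff] using this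
    set αbar : G ⧸ F →* (G ⧸ N) ⧸ C := QuotientGroup.lift F α hFα with hαbar
    set δ : ↥Fq →* (G ⧸ N) ⧸ C := αbar.comp Fq.subtype with hδ
    have hαcomp : αbar.comp (QuotientGroup.mk' F) = α := by
      ext y
      simp [hαbar]
    have hXnil : Group.IsNilpotent ↥δ.range := by
      refine nilpotent_range_of_isPronilpotent hFq.2.2.1 δ ?_
      have hkerα : IsOpen ((α.ker : Subgroup G) : Set G) := by
        refine Subgroup.isOpen_mono ?_ hNo
        intro y hy
        have hy1 : π y = 1 := by
          simp [hπ, QuotientGroup.eq_one_iff, hy]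
        simp [hα, MonoidHom.mem_ker, hy1]
      have hker : ((δ.ker : Subgroup ↥Fq) : Set ↥Fq)
          = Subtype.val ⁻¹' (αbar ⁻¹' {1}) := by
        ext y
        simp [hδ, MonoidHom.mem_ker]
      rw [hker]
      refine (IsOpen.preimage continuous_subtype_val ?_)
      rw [← (QuotientGroup.isQuotientMap_mk F).isOpen_preimage]
      have : (QuotientGroup.mk : G → G ⧸ F) ⁻¹' (αbar ⁻¹' {1}) = (α.ker : Set G) := by
        ext y
        simp [hαbar, MonoidHom.mem_ker]
      rw [this]
      exact hkerα
    have hWX : Wb.map σ = δ.range := by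
      rw [hWdef, Subgroup.map_map]
      have h1 : F2.map (σ.comp π) = (F2.map (QuotientGroup.mk' F)).map αbar := by
        rw [Subgroup.map_map, hαcomp, hα]
      have h2 : F2.map (QuotientGroup.mk' F) = Fq := by
        rw [hF2eq]
        exact Subgroup.map_comap_eq_self_of_surjective (QuotientGroup.mk'_surjective F) Fq
      rw [h1, h2, hδ, MonoidHom.range_comp, Subgroup.range_subtype]
    have hn : ∃ n, gSeries Wb n ≤ C := by
      have hXnil' : Group.IsNilpotent ↥(Wb.map σ) := by rw [hWX]; exact hXnil
      obtain ⟨n, hgn⟩ := gSeries_eq_bot_of_isNilpotent (Wb.map σ) hXnil'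
      refine ⟨n, ?_⟩
      have hmaple : (gSeries Wb n).map σ = gSeries (Wb.map σ) n := gSeries_map σ Wb n
      intro y hy
      have h1 : σ y ∈ gSeries (Wb.map σ) n := by
        rw [← hmaple]
        exact Subgroup.mem_map_of_mem σ hy
      rw [hgn, Subgroup.mem_bot] at h1
      have : y ∈ (QuotientGroup.mk' C).ker := by
        rw [MonoidHom.mem_ker]
        exact h1
      rwa [QuotientGroup.ker_mk'] at this
    obtain ⟨n, hWC⟩ := hn
    have hfit := key_finite C Wb Hb Kb hCnormal hCnil hWnormal hCH hHW hKH hKnorm hKnil n hWC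
    refine hfit ?_
    exact ⟨⟨x, hxK⟩, rfl⟩
  -- the closed normal pronilpotent subgroup D
  set D : Subgroup G := ⨅ N : {N : Subgroup G // N.Normal ∧ IsOpen ((N : Subgroup G) : Set G)},
    (haveI := N.2.1
     (FitIn (⊤ : Subgroup (G ⧸ N.1))).comap (QuotientGroup.mk' N.1)) with hDdef
  have hmemD : ∀ y : G, y ∈ D ↔
      ∀ N : {N : Subgroup G // N.Normal ∧ IsOpen ((N : Subgroup G) : Set G)},
        (haveI := N.2.1; QuotientGroup.mk' N.1 y ∈ FitIn (⊤ : Subgroup (G ⧸ N.1))) := by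
    intro y
    rw [hDdef, Subgroup.mem_iInf]
    rfl
  have hND : ∀ N : {N : Subgroup G // N.Normal ∧ IsOpen ((N : Subgroup G) : Set G)},
      N.1 ≤ (haveI := N.2.1
        (FitIn (⊤ : Subgroup (G ⧸ N.1))).comap (QuotientGroup.mk' N.1)) := by
    intro N y hy
    haveI := N.2.1
    have : QuotientGroup.mk' N.1 y = 1 := by
      simp [QuotientGroup.eq_one_iff, hy]
    simp only [Subgroup.mem_comap, this]
    exact one_mem _
  have hDclosed : IsClosed (D : Set G) := by
    rw [hDdef, Subgroup.coe_iInf]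
    refine isClosed_iInter fun N => ?_
    haveI := N.2.1
    exact Subgroup.isClosed_of_isOpen _ (Subgroup.isOpen_mono (hND N) N.2.2)
  have hDnormal : D.Normal := by
    constructor
    intro y hy g
    rw [hmemD] at hy ⊢
    intro N
    haveI := N.2.1
    haveI : (FitIn (⊤ : Subgroup (G ⧸ N.1))).Normal := fitIn_top_normal
    haveI hFitN : (FitIn (⊤ : Subgroup (G ⧸ N.1))).Normal := fitIn_top_normal
    have h1 := hy N
    have h2 := hFitN.conj_mem _ h1 (QuotientGroup.mk' N.1 g)
    simpa [map_mul] using h2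
  have hDpro : IsPronilpotent ↥D := by
    intro M hM hMopen
    haveI := hM
    obtain ⟨V, hVopen, hVpre⟩ := isOpen_induced_iff.mp hMopen
    have h1V : (1 : G) ∈ V := by
      have h1' : (1 : ↥D) ∈ Subtype.val ⁻¹' V := by
        rw [hVpre]
        exact one_mem M
      exact h1'
    obtain ⟨U, hUclopen, h1U, hUV⟩ := compact_exists_isClopen_in_isOpen hVopen h1V
    obtain ⟨NN, hNU⟩ :=
      IsTopologicalGroup.exist_openNormalSubgroup_sub_clopen_nhds_of_one hUclopen h1U
    haveI hNNnorm : NN.toSubgroup.Normal := NN.isNormal'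
    have hNNopen : IsOpen ((NN.toSubgroup : Subgroup G) : Set G) := NN.isOpen
    haveI : Finite (G ⧸ NN.toSubgroup) := NN.toSubgroup.quotient_finite_of_isOpen hNNopen
    set φ : ↥D →* G ⧸ NN.toSubgroup := (QuotientGroup.mk' NN.toSubgroup).comp D.subtype with hφ
    have hrange_le : φ.range ≤ FitIn (⊤ : Subgroup (G ⧸ NN.toSubgroup)) := by
      rintro y ⟨d, rfl⟩
      have hd := (hmemD (d : G)).mp d.2 ⟨NN.toSubgroup, hNNnorm, hNNopen⟩
      exact hd
    have hφnil : Group.IsNilpotent (↥D ⧸ φ.ker) := by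
      haveI := nilpotent_of_le hrange_le (fitIn_nilpotent (⊤ : Subgroup (G ⧸ NN.toSubgroup)))
      exact nilpotent_of_mulEquiv (QuotientGroup.quotientKerEquivRange φ).symm
    have hkerM : φ.ker ≤ M := by
      intro y hy
      have hyN : (y : G) ∈ NN.toSubgroup := by
        rw [MonoidHom.mem_ker] at hy
        have : (QuotientGroup.mk' NN.toSubgroup) ((y : G)) = 1 := hy
        rwa [← QuotientGroup.ker_mk' NN.toSubgroup, MonoidHom.mem_ker]
      have hyV : y ∈ Subtype.val ⁻¹' V := hUV (hNU hyN)
      rw [hVpre] at hyV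
      exact hyV
    set ψ : (↥D ⧸ φ.ker) →* (↥D ⧸ M) :=
      QuotientGroup.map φ.ker M (MonoidHom.id ↥D) (by simpa using hkerM) with hψ
    have hψsurj : Function.Surjective ψ := by
      intro y
      obtain ⟨d, rfl⟩ := QuotientGroup.mk'_surjective M y
      exact ⟨QuotientGroup.mk d, by simp [hψ, QuotientGroup.map_mk]⟩
    haveI := hφnil
    exact nilpotent_of_surjective ψ hψsurj
  have hDF : D ≤ F := hFmax D hDclosed hDnormal hDpro
  intro x hxK
  have hxD : ((x : ↥H) : G) ∈ D := by
    rw [hmemD]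
    intro N
    exact hKmapFit N.1 N.2.1 N.2.2 x hxK
  exact hDF hxD
end

section
/- Let G be a profinite group such that γ_∞(G) is finite. Then the centralizer C_G(γ_∞(G)) is an open pronilpotent subgroup of G. -/
open scoped commutatorElement

private lemma lcsMapSurj {G H : Type*} [Group G] [Group H] (f : G →* H)
    (hf : Function.Surjective f) (n : ℕ) :
    (Subgroup.lowerCentralSeries (⊤ : Subgroup G) n).map f = Subgroup.lowerCentralSeries (⊤ : Subgroup H) n := by
  induction n with
  | zero => simpa using Subgroup.map_top_of_surjective f hf
  | succ n ih =>
    show (⁅Subgroup.lowerCentralSeries (⊤ : Subgroup G) n, (⊤ : Subgroup G)⁆).map f = ⁅Subgroup.lowerCentralSeries (⊤ : Subgroup H) n, ⊤⁆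
    rw [Subgroup.map_commutator, ih, Subgroup.map_top_of_surjective f hf]

private lemma lcsStabilize (Q : Type*) [Group Q] [Finite Q] :
    ∃ k, ∀ n, k ≤ n → Subgroup.lowerCentralSeries (⊤ : Subgroup Q) n = Subgroup.lowerCentralSeries (⊤ : Subgroup Q) k := by
  obtain ⟨k, hk⟩ : ∃ k, ∀ n, Nat.card (Subgroup.lowerCentralSeries (⊤ : Subgroup Q) k) ≤
      Nat.card (Subgroup.lowerCentralSeries (⊤ : Subgroup Q) n) := by
    obtain ⟨k, hk⟩ := Nat.sInf_mem
      (s := Set.range fun n => Nat.card (Subgroup.lowerCentralSeries (⊤ : Subgroup Q) n)) ⟨_, ⟨0, rfl⟩⟩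
    exact ⟨k, fun n => hk.trans_le (Nat.sInf_le ⟨n, rfl⟩)⟩
  refine ⟨k, fun n hn => ?_⟩
  have hle : (Subgroup.lowerCentralSeries (⊤ : Subgroup Q) n : Set Q) ⊆ Subgroup.lowerCentralSeries (⊤ : Subgroup Q) k :=
    lowerCentralSeries_antitone _ hn
  have h2 : (Subgroup.lowerCentralSeries (⊤ : Subgroup Q) k : Set Q).ncard ≤ (Subgroup.lowerCentralSeries (⊤ : Subgroup Q) n : Set Q).ncard := by
    rw [← Nat.card_coe_set_eq, ← Nat.card_coe_set_eq]
    exact hk n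
  exact SetLike.coe_set_eq.mp (Set.eq_of_subset_of_ncard_le hle h2 (Set.toFinite _))

theorem centralizer_of_finite_gammaInf_open_pronilpotent
    (G : Type) [Group G] [TopologicalSpace G] [IsTopologicalGroup G]
    [CompactSpace G] [T2Space G] [TotallyDisconnectedSpace G]
    (hfin : (gammaInf G : Set G).Finite) :
    IsOpen ((Subgroup.centralizer (gammaInf G : Set G) : Subgroup G) : Set G) ∧
      IsPronilpotent ↥(Subgroup.centralizer (gammaInf G : Set G)) := by
  classical
  have hSfin := hfin
  set S : Set G := (gammaInf G : Set G) with hS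
  have hnormal : (gammaInf G).Normal := by
    constructor
    intro n hn g
    rw [gammaInf, Subgroup.mem_iInf] at hn ⊢
    intro i
    exact (Subgroup.is_normal_topologicalClosure (Subgroup.lowerCentralSeries (⊤ : Subgroup G) i)).conj_mem _ (hn i) g
  set C := Subgroup.centralizer S with hC
  have memC : ∀ x : G, x ∈ C ↔ ∀ g ∈ S, g * x = x * g := fun x => Subgroup.mem_centralizer_iff
  have hopen : IsOpen (C : Set G) := by
    have heq : (C : Set G) = ⋂ g ∈ S, (fun x => x * g * x⁻¹) ⁻¹' (S \ {g})ᶜ := by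
      ext x
      simp only [Set.mem_iInter, Set.mem_preimage, Set.mem_compl_iff, Set.mem_diff,
        Set.mem_singleton_iff, SetLike.mem_coe, not_and, not_not]
      rw [memC]
      constructor
      · intro h g hg _
        rw [← h g hg]
        exact mul_inv_cancel_right g x
      · intro h g hg
        have hmem : x * g * x⁻¹ ∈ S := hnormal.conj_mem g hg x
        have h1 : x * g * x⁻¹ = g := h g hg hmem
        calc g * x = (x * g * x⁻¹) * x := by rw [h1]
          _ = x * g := by group
    rw [heq]
    refine Set.Finite.isOpen_biInter hSfin fun g _ => ?_
    exact IsOpen.preimage (by continuity)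
      (hSfin.subset Set.diff_subset).isClosed.isOpen_compl
  have hclosed : IsClosed (C : Set G) := by
    have heq2 : (C : Set G) = ⋂ g ∈ S, {x : G | g * x = x * x * x⁻¹ * g} := by
      ext x
      simp only [Set.mem_iInter, Set.mem_setOf_eq, SetLike.mem_coe]
      rw [memC]
      constructor
      · intro h g hg; rw [h g hg]; group
      · intro h g hg; rw [h g hg]; group
    rw [heq2]
    exact isClosed_biInter fun g _ =>
      isClosed_eq (continuous_const.mul continuous_id) (by continuity)
  refine ⟨hopen, ?_⟩
  haveI : CompactSpace ↥C := isCompact_iff_compactSpace.mp hclosed.isCompact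
  intro N hN hNopen
  haveI := hN
  haveI hfinQ : Finite (↥C ⧸ N) := N.quotient_finite_of_isOpen hNopen
  haveI : DiscreteTopology (↥C ⧸ N) := QuotientGroup.discreteTopology hNopen
  set π := QuotientGroup.mk' N with hπ
  have hπcont : Continuous π := continuous_quotient_mk'
  have hπsurj : Function.Surjective π := QuotientGroup.mk'_surjective N
  obtain ⟨k, hk⟩ := lcsStabilize (↥C ⧸ N)
  have hcent : ∀ q ∈ Subgroup.lowerCentralSeries (⊤ : Subgroup (↥C ⧸ N)) k, ∀ r : ↥C ⧸ N, q * r = r * q := by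
    intro q hq
    set V : ℕ → Set ↥C :=
      fun n => closure (Subgroup.lowerCentralSeries (⊤ : Subgroup ↥C) n : Set ↥C) ∩ π ⁻¹' {q} with hV
    have hVne : ∀ n, (V n).Nonempty := by
      intro n
      have h1 : q ∈ Subgroup.lowerCentralSeries (⊤ : Subgroup (↥C ⧸ N)) (max n k) := by
        rw [hk (max n k) (le_max_right n k)]; exact hq
      rw [← lcsMapSurj π hπsurj] at h1
      obtain ⟨x, hx, hxq⟩ := Subgroup.mem_map.mp h1
      exact ⟨x, subset_closure (lowerCentralSeries_antitone _ (le_max_left n k) hx), hxq⟩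
    have hVcl : ∀ n, IsClosed (V n) := fun n =>
      isClosed_closure.inter (IsClosed.preimage hπcont (isClosed_discrete _))
    have hVmono : ∀ n, V (n + 1) ⊆ V n := fun n =>
      Set.inter_subset_inter_left _ (closure_mono (lowerCentralSeries_antitone _ (Nat.le_succ n)))
    obtain ⟨x, hx⟩ := IsCompact.nonempty_iInter_of_sequence_nonempty_isCompact_isClosed
      V hVmono hVne ((hVcl 0).isCompact) hVcl
    simp only [Set.mem_iInter, hV, Set.mem_inter_iff, Set.mem_preimage,
      Set.mem_singleton_iff] at hx
    have hxS : (x : G) ∈ gammaInf G := by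
      rw [gammaInf, Subgroup.mem_iInf]
      intro n
      have hmapsto : Set.MapsTo (Subtype.val : ↥C → G)
          (Subgroup.lowerCentralSeries (⊤ : Subgroup ↥C) n : Set ↥C) (Subgroup.lowerCentralSeries (⊤ : Subgroup G) n : Set G) := by
        intro y hy
        exact lowerCentralSeries_map_subtype_le C n (Subgroup.mem_map_of_mem C.subtype hy)
      exact map_mem_closure continuous_subtype_val (hx n).1 hmapsto
    have hxcentral : ∀ d : ↥C, x * d = d * x := by
      intro d
      exact Subtype.ext (Subgroup.mem_centralizer_iff.mp d.2 (x : G) hxS)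
    intro r
    obtain ⟨d, rfl⟩ := hπsurj r
    have hq' : q = π x := ((hx 0).2).symm
    rw [hq', ← map_mul, ← map_mul, hxcentral d]
  rw [nilpotent_iff_lowerCentralSeries]
  refine ⟨k, ?_⟩
  have h2 : Subgroup.lowerCentralSeries (⊤ : Subgroup (↥C ⧸ N)) (k + 1) ≤ ⊥ := by
    show (⁅Subgroup.lowerCentralSeries (⊤ : Subgroup (↥C ⧸ N)) k, (⊤ : Subgroup (↥C ⧸ N))⁆) ≤ ⊥
    rw [Subgroup.commutator_le]
    intro p hp r _
    rw [Subgroup.mem_bot]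
    exact commutatorElement_eq_one_iff_commute.mpr (hcent p hp r)
  exact le_bot_iff.mp (hk (k + 1) (Nat.le_succ k) ▸ h2)
end

section
/- There are functions f : ℕ → ℕ and f' : ℕ → ℕ such that the following holds: if V is a finite abelian group and U is a group of automorphisms of V with |U| coprime to |V|, and if |[V, u]| ≤ n for every u ∈ U, then |[V, U]| ≤ f(n) and |U| ≤ f'(n). -/
open scoped commutatorElement

namespace BCA

open Subgroup

variable {M : Type*} [CommGroup M]

/-- commutator homomorphism of an automorphism. -/
def phiA (u : MulAut M) : M →* M where
  toFun v := v⁻¹ * u v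
  map_one' := by simp
  map_mul' x y := by
    simp only [map_mul, mul_inv]
    rw [mul_mul_mul_comm]

lemma phiA_apply (u : MulAut M) (v : M) : phiA u v = v⁻¹ * u v := rfl

lemma mem_ker_phiA {u : MulAut M} {v : M} : v ∈ (phiA u).ker ↔ u v = v := by
  rw [MonoidHom.mem_ker, phiA_apply, inv_mul_eq_one, eq_comm]

section group
variable {G : Type*} [Group G]

/-- injective multiplication map when the intersection is trivial. -/
lemma card_mul_le_of_inf_eq_bot [Finite G] {H K : Subgroup G} (h : H ⊓ K = ⊥) :
    Nat.card H * Nat.card K ≤ Nat.card G := by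
  rw [← Nat.card_prod]
  refine Nat.card_le_card_of_injective (fun p => (p.1 : G) * (p.2 : G)) ?_
  rintro ⟨x, y⟩ ⟨x', y'⟩ hxy
  simp only at hxy
  have e1 : (↑x' : G)⁻¹ * ↑x = ↑y' * (↑y : G)⁻¹ := by
    rw [inv_mul_eq_iff_eq_mul, ← mul_assoc, ← hxy, mul_assoc, mul_inv_cancel, mul_one]
  have hmem : (↑x' : G)⁻¹ * ↑x ∈ H ⊓ K := by
    rw [Subgroup.mem_inf]
    constructor
    · exact mul_mem (H.inv_mem x'.2) x.2
    · rw [e1]; exact mul_mem y'.2 (K.inv_mem y.2)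
  rw [h, Subgroup.mem_bot, inv_mul_eq_one] at hmem
  have hx : x' = x := Subtype.ext hmem
  subst hx
  have hy : y = y' := Subtype.ext (by exact mul_left_cancel hxy)
  rw [hy]

lemma subgroup_eq_of_le_of_card_le [Finite G] {H K : Subgroup G} (hle : H ≤ K)
    (hc : Nat.card K ≤ Nat.card H) : H = K := by
  refine SetLike.coe_injective ?_
  refine Set.eq_of_subset_of_ncard_le hle ?_ (Set.toFinite _)
  rwa [← Nat.card_coe_set_eq, ← Nat.card_coe_set_eq]

lemma card_lt_card_of_lt [Finite G] {H K : Subgroup G} (hlt : H < K) :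
    Nat.card H < Nat.card K := by
  have h1 : (H : Set G) ⊂ (K : Set G) := by
    rw [Set.ssubset_iff_subset_ne]
    exact ⟨hlt.le, fun hc => hlt.ne (SetLike.coe_injective hc)⟩
  have h2 := Set.ncard_lt_ncard h1 (Set.toFinite _)
  rw [← Nat.card_coe_set_eq (H : Set G), ← Nat.card_coe_set_eq (K : Set G)] at h2
  exact h2

end group

end BCA

namespace Stage2

open BCA Subgroup

variable {M : Type*} [CommGroup M]

lemma pow_fix (u : MulAut M) {x : M} (hx : u x = x) : ∀ j : ℕ, (u ^ j) x = x := by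
  intro j
  induction j with
  | zero => simp
  | succ j ih => rw [pow_succ, MulAut.mul_apply, hx, ih]

lemma pow_apply_eq (u : MulAut M) {v x : M} (hx : u x = x) (hv : u v = v * x) :
    ∀ j : ℕ, (u ^ j) v = v * x ^ j := by
  intro j
  induction j with
  | zero => simp
  | succ j ih =>
      rw [pow_succ, MulAut.mul_apply, hv, map_mul, ih, pow_fix u hx j, mul_assoc, pow_succ]

lemma eq_one_of_fix_of_mem_range [Finite M] (u : MulAut M) {N : ℕ} (hu : u ^ N = 1)
    (hcop : (Nat.card M).Coprime N) {x : M} (hx : x ∈ (phiA u).range) (hfix : u x = x) :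
    x = 1 := by
  obtain ⟨v, hv⟩ := hx
  have hv' : u v = v * x := by
    rw [← hv, phiA_apply, ← mul_assoc, mul_inv_cancel, one_mul]
  have hN := pow_apply_eq u hfix hv' N
  rw [hu, MulAut.one_apply, eq_comm, mul_eq_left] at hN
  have h1 : orderOf x ∣ Nat.gcd (Nat.card M) N :=
    Nat.dvd_gcd (orderOf_dvd_natCard x) (orderOf_dvd_of_pow_eq_one hN)
  rw [hcop.gcd_eq_one, Nat.dvd_one] at h1
  exact orderOf_eq_one_iff.mp h1

lemma trivial_of_trivial_on_range [Finite M] (u : MulAut M) {N : ℕ} (hu : u ^ N = 1)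
    (hcop : (Nat.card M).Coprime N) (h : ∀ w ∈ (phiA u).range, u w = w) : ∀ v, u v = v := by
  intro v
  have hx : phiA u v ∈ (phiA u).range := ⟨v, rfl⟩
  have h1 : phiA u v = 1 := eq_one_of_fix_of_mem_range u hu hcop hx (h _ hx)
  rw [phiA_apply, inv_mul_eq_one] at h1
  exact h1.symm

lemma card_sup_le [Finite M] (H K : Subgroup M) :
    Nat.card ↥(H ⊔ K) ≤ Nat.card H * Nat.card K := by
  set f : ↥H × ↥K →* M :=
    (H.subtype.comp (MonoidHom.fst ↥H ↥K)) * (K.subtype.comp (MonoidHom.snd ↥H ↥K)) with hf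
  have hle : H ⊔ K ≤ f.range := by
    refine sup_le ?_ ?_
    · intro x hx; exact ⟨(⟨x, hx⟩, 1), by simp [hf]⟩
    · intro x hx; exact ⟨(1, ⟨x, hx⟩), by simp [hf]⟩
  calc Nat.card ↥(H ⊔ K) ≤ Nat.card f.range := Subgroup.card_le_of_le hle
    _ ≤ Nat.card (↥H × ↥K) := Nat.card_le_card_of_surjective _ f.rangeRestrict_surjective
    _ = Nat.card H * Nat.card K := Nat.card_prod _ _

lemma card_finsetsup_le [Finite M] {ι : Type*} (s : Finset ι) (f : ι → Subgroup M) :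
    Nat.card ↥(s.sup f) ≤ ∏ i ∈ s, Nat.card ↥(f i) := by
  classical
  induction s using Finset.induction_on with
  | empty => simp [Subgroup.card_bot]
  | @insert a s ha ih =>
      rw [Finset.sup_insert, Finset.prod_insert ha]
      exact le_trans (card_sup_le _ _) (Nat.mul_le_mul_left _ ih)

end Stage2

namespace Stage3
open BCA Subgroup

variable {G : Type*} [Group G] [Finite G]

lemma maps_inv (H : Subgroup G) (u : MulAut G) (hu : ∀ x ∈ H, u x ∈ H) :
    ∀ x ∈ H, u⁻¹ x ∈ H := by
  have hle : H.map u.toMonoidHom ≤ H := by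
    rintro y ⟨x, hx, rfl⟩
    exact hu x hx
  have hcard : Nat.card ↥(H.map u.toMonoidHom) = Nat.card H :=
    (Nat.card_congr (H.equivMapOfInjective u.toMonoidHom u.injective).toEquiv).symm
  have heq : H.map u.toMonoidHom = H := subgroup_eq_of_le_of_card_le hle (le_of_eq hcard.symm)
  intro x hx
  rw [← heq] at hx
  obtain ⟨y, hy, rfl⟩ := hx
  have : u⁻¹ (u.toMonoidHom y) = y := u.symm_apply_apply y
  rw [this]
  exact hy

def restrictAut (H : Subgroup G) (u : MulAut G) (hu : ∀ x ∈ H, u x ∈ H) : MulAut ↥H where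
  toFun x := ⟨u x, hu x x.2⟩
  invFun x := ⟨u⁻¹ x, maps_inv H u hu x x.2⟩
  left_inv x := Subtype.ext (u.symm_apply_apply x)
  right_inv x := Subtype.ext (u.apply_symm_apply x)
  map_mul' x y := Subtype.ext (by simp)

@[simp] lemma restrictAut_apply_coe (H : Subgroup G) (u : MulAut G) (hu : ∀ x ∈ H, u x ∈ H)
    (x : ↥H) : ((restrictAut H u hu) x : G) = u (x : G) := rfl

def restrictHom {A : Type*} [Group A] (H : Subgroup G) (ρ : A →* MulAut G)
    (hinv : ∀ (a : A), ∀ x ∈ H, ρ a x ∈ H) : A →* MulAut ↥H where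
  toFun a := restrictAut H (ρ a) (hinv a)
  map_one' := by
    refine MulEquiv.ext fun x => Subtype.ext ?_
    simp
  map_mul' a b := by
    refine MulEquiv.ext fun x => Subtype.ext ?_
    simp [MulAut.mul_apply]

@[simp] lemma restrictHom_apply_coe {A : Type*} [Group A] (H : Subgroup G) (ρ : A →* MulAut G)
    (hinv : ∀ (a : A), ∀ x ∈ H, ρ a x ∈ H) (a : A) (x : ↥H) :
    ((restrictHom H ρ hinv a) x : G) = ρ a (x : G) := rfl

end Stage3

namespace Stage4
open BCA Subgroup Stage2 Stage3

lemma mul_inj_of_inf_eq_bot {G : Type*} [Group G] {H K : Subgroup G} (h : H ⊓ K = ⊥) :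
    Function.Injective (fun p : ↥H × ↥K => (p.1 : G) * (p.2 : G)) := by
  rintro ⟨x, y⟩ ⟨x', y'⟩ hxy
  simp only at hxy
  have e1 : (↑x' : G)⁻¹ * ↑x = ↑y' * (↑y : G)⁻¹ := by
    rw [inv_mul_eq_iff_eq_mul, ← mul_assoc, ← hxy, mul_assoc, mul_inv_cancel, mul_one]
  have hmem : (↑x' : G)⁻¹ * ↑x ∈ H ⊓ K := by
    rw [Subgroup.mem_inf]
    constructor
    · exact mul_mem (H.inv_mem x'.2) x.2
    · rw [e1]; exact mul_mem y'.2 (K.inv_mem y.2)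
  rw [h, Subgroup.mem_bot, inv_mul_eq_one] at hmem
  have hx : x' = x := Subtype.ext hmem
  subst hx
  have hy : y = y' := Subtype.ext (by exact mul_left_cancel hxy)
  rw [hy]

lemma card_range_mul_card_ker {G H : Type*} [Group G] [Group H] [Finite G] (f : G →* H) :
    Nat.card f.range * Nat.card f.ker = Nat.card G := by
  rw [Subgroup.card_eq_card_quotient_mul_card_subgroup f.ker]
  congr 1
  exact (Nat.card_congr (QuotientGroup.quotientKerEquivRange f).toEquiv).symm

end Stage4

namespace Stage5
open BCA Subgroup Stage2 Stage3 Stage4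

theorem core (k : ℕ) :
    ∀ (M : Type) [CommGroup M] [Finite M] (A : Type) [CommGroup A] [Finite A]
      (ρ : A →* MulAut M), Nat.card M ≤ k → (Nat.card M).Coprime (Nat.card A) →
      (∀ v : M, (∀ a : A, ρ a v = v) → v = 1) →
      ∃ a : A, Nat.card M ≤ (Nat.card (phiA (ρ a)).range) ^ 2 := by
  induction k using Nat.strong_induction_on with
  | _ k IH =>
  intro M _ _ A _ _ ρ hk hcop hfix
  classical
  letI : Fintype A := Fintype.ofFinite A
  obtain ⟨a1, -, hmax⟩ := Finset.exists_max_image Finset.univ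
    (fun a => Nat.card (phiA (ρ a)).range) Finset.univ_nonempty
  have hmax' : ∀ a : A, Nat.card (phiA (ρ a)).range ≤ Nat.card (phiA (ρ a1)).range :=
    fun a => hmax a (Finset.mem_univ a)
  set r := Nat.card (phiA (ρ a1)).range with hr
  set T0 := (phiA (ρ a1)).ker with hT0
  set T1 := (phiA (ρ a1)).range with hT1
  have hcards : Nat.card M = Nat.card ↥T1 * Nat.card ↥T0 := by
    rw [← card_range_mul_card_ker (phiA (ρ a1))]
  by_cases hr2 : r ≤ 1
  · refine ⟨a1, ?_⟩
    have hall : ∀ (a : A) (v : M), ρ a v = v := by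
      intro a v
      have h1 : Nat.card (phiA (ρ a)).range ≤ 1 := le_trans (hmax' a) hr2
      have h2 : (phiA (ρ a)).range = ⊥ := by
        have := Subgroup.one_lt_card_iff_ne_bot (phiA (ρ a)).range
        by_contra hc
        exact absurd h1 (not_le.mpr (this.mpr hc))
      have h3 : phiA (ρ a) v ∈ (⊥ : Subgroup M) := h2 ▸ ⟨v, rfl⟩
      rw [Subgroup.mem_bot, phiA_apply, inv_mul_eq_one] at h3
      exact h3.symm
    have hsub : ∀ v : M, v = 1 := fun v => hfix v (fun a => hall a v)
    have hM1 : Nat.card M = 1 := by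
      have : Subsingleton M := ⟨fun x y => by rw [hsub x, hsub y]⟩
      exact Nat.card_eq_one_iff_unique.mpr ⟨this, ⟨1⟩⟩
    have hrpos : 0 < r := Nat.card_pos
    calc Nat.card M = 1 := hM1
      _ ≤ r ^ 2 := Nat.one_le_iff_ne_zero.mpr (pow_ne_zero 2 (Nat.pos_iff_ne_zero.mp hrpos))
  · push_neg at hr2
    have hNpow : ∀ a : A, (ρ a) ^ (Nat.card A) = 1 := by
      intro a; rw [← map_pow, pow_card_eq_one', map_one]
    have hinf : T0 ⊓ T1 = ⊥ := by
      rw [eq_bot_iff]; intro x hx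
      rw [Subgroup.mem_inf] at hx
      rw [Subgroup.mem_bot]
      exact eq_one_of_fix_of_mem_range (ρ a1) (hNpow a1) hcop hx.2 (mem_ker_phiA.mp hx.1)
    have hcomm : ∀ (a b : A) (x : M), ρ a (ρ b x) = ρ b (ρ a x) := by
      intro a b x
      rw [← MulAut.mul_apply, ← map_mul, mul_comm, map_mul, MulAut.mul_apply]
    have hinv0 : ∀ (a : A), ∀ x ∈ T0, ρ a x ∈ T0 := by
      intro a x hx
      rw [hT0, mem_ker_phiA] at hx ⊢
      rw [hcomm a1 a, hx]
    have hinv1 : ∀ (a : A), ∀ x ∈ T1, ρ a x ∈ T1 := by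
      rintro a x ⟨v, rfl⟩
      refine ⟨ρ a v, ?_⟩
      rw [phiA_apply, phiA_apply, map_mul, map_inv, hcomm a1 a]
    set ρ0 := restrictHom T0 ρ hinv0 with hρ0
    set ρ1 := restrictHom T1 ρ hinv1 with hρ1
    set g0 : A → ℕ := fun a => Nat.card (phiA (ρ0 a)).range with hg0
    set g1 : A → ℕ := fun a => Nat.card (phiA (ρ1 a)).range with hg1
    -- decomposition of M
    have hT01card : Nat.card (↥T0 × ↥T1) = Nat.card M := by
      rw [Nat.card_prod, hcards, mul_comm]
    have hFbij : Function.Bijective (fun p : ↥T0 × ↥T1 => (p.1 : M) * (p.2 : M)) :=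
      (Nat.bijective_iff_injective_and_card _).mpr ⟨mul_inj_of_inf_eq_bot hinf, hT01card⟩
    have hdecomp : ∀ v : M, ∃ (t0 : ↥T0) (t1 : ↥T1), v = (t0 : M) * (t1 : M) := by
      intro v
      obtain ⟨⟨t0, t1⟩, hp⟩ := hFbij.2 v
      exact ⟨t0, t1, hp.symm⟩
    -- coercion identities
    have hcoe0 : ∀ (a : A) (t0 : ↥T0), ((phiA (ρ0 a) t0 : ↥T0) : M) = phiA (ρ a) (t0 : M) := by
      intro a t0
      rw [phiA_apply, phiA_apply]
      push_cast
      rw [hρ0, restrictHom_apply_coe]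
    have hcoe1 : ∀ (a : A) (t1 : ↥T1), ((phiA (ρ1 a) t1 : ↥T1) : M) = phiA (ρ a) (t1 : M) := by
      intro a t1
      rw [phiA_apply, phiA_apply]
      push_cast
      rw [hρ1, restrictHom_apply_coe]
    -- splitting of the ranges
    have hsplit : ∀ a : A, Nat.card (phiA (ρ a)).range = g0 a * g1 a := by
      intro a
      have hmemR : ∀ (x : ↥(phiA (ρ0 a)).range) (y : ↥(phiA (ρ1 a)).range),
          ((x : ↥T0) : M) * ((y : ↥T1) : M) ∈ (phiA (ρ a)).range := by
        rintro ⟨x, ⟨t0, rfl⟩⟩ ⟨y, ⟨t1, rfl⟩⟩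
        refine ⟨(t0 : M) * (t1 : M), ?_⟩
        rw [map_mul, hcoe0, hcoe1]
      set G2 : ↥(phiA (ρ0 a)).range × ↥(phiA (ρ1 a)).range → ↥(phiA (ρ a)).range :=
        fun p => ⟨_, hmemR p.1 p.2⟩ with hG2
      have hG2inj : Function.Injective G2 := by
        rintro ⟨x, y⟩ ⟨x', y'⟩ h
        have h' : ((x : ↥T0) : M) * ((y : ↥T1) : M) = ((x' : ↥T0) : M) * ((y' : ↥T1) : M) :=
          congrArg Subtype.val h
        have h2 := mul_inj_of_inf_eq_bot hinf
          (a₁ := ((x : ↥T0), (y : ↥T1))) (a₂ := ((x' : ↥T0), (y' : ↥T1))) h'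
        have hx : (x : ↥T0) = (x' : ↥T0) := congrArg Prod.fst h2
        have hy : (y : ↥T1) = (y' : ↥T1) := congrArg Prod.snd h2
        exact Prod.ext (Subtype.ext hx) (Subtype.ext hy)
      have hG2surj : Function.Surjective G2 := by
        rintro ⟨w, ⟨v, rfl⟩⟩
        obtain ⟨t0, t1, rfl⟩ := hdecomp v
        refine ⟨(⟨phiA (ρ0 a) t0, ⟨t0, rfl⟩⟩, ⟨phiA (ρ1 a) t1, ⟨t1, rfl⟩⟩), ?_⟩
        refine Subtype.ext ?_
        show ((phiA (ρ0 a) t0 : ↥T0) : M) * ((phiA (ρ1 a) t1 : ↥T1) : M) = _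
        rw [hcoe0, hcoe1, ← map_mul]
      have hcard := Nat.card_congr (Equiv.ofBijective G2 ⟨hG2inj, hG2surj⟩)
      rw [Nat.card_prod] at hcard
      exact hcard.symm
    -- trivial action of a1 on T0
    have h01 : ∀ a : A, (phiA (ρ0 (a * a1))).range = (phiA (ρ0 a)).range := by
      intro a
      have hfun : phiA (ρ0 (a * a1)) = phiA (ρ0 a) := by
        ext t
        rw [phiA_apply, phiA_apply]
        push_cast
        rw [hρ0, restrictHom_apply_coe, restrictHom_apply_coe, map_mul, MulAut.mul_apply,
          mem_ker_phiA.mp t.2]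
      rw [hfun]
    -- Grassmann-type inequality on T1
    have hgrass : ∀ a : A, Nat.card ↥T1 ≤ g1 a * g1 (a * a1) := by
      intro a
      have hXY : (phiA (ρ1 a)).ker ⊓ (phiA (ρ1 (a * a1))).ker = ⊥ := by
        rw [eq_bot_iff]; intro x hx
        rw [Subgroup.mem_inf, mem_ker_phiA, mem_ker_phiA] at hx
        have hx1 : ρ1 a1 x = x := by
          have h1 : ρ1 a (ρ1 a1 x) = ρ1 a x := by
            rw [← MulAut.mul_apply, ← map_mul, hx.2, hx.1]
          exact (ρ1 a).injective h1
        have hx2 : (x : M) ∈ T0 ⊓ T1 := by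
          rw [Subgroup.mem_inf]
          refine ⟨?_, x.2⟩
          rw [mem_ker_phiA]
          have := congrArg Subtype.val hx1
          rw [hρ1, restrictHom_apply_coe] at this
          exact this
        rw [hinf, Subgroup.mem_bot] at hx2
        rw [Subgroup.mem_bot]
        exact Subtype.ext hx2
      have h3 := card_mul_le_of_inf_eq_bot hXY
      have e1 := card_range_mul_card_ker (phiA (ρ1 a))
      have e2 := card_range_mul_card_ker (phiA (ρ1 (a * a1)))
      have hpos : 0 < Nat.card ↥T1 := Nat.card_pos
      have key : Nat.card ↥T1 * Nat.card ↥T1 ≤ Nat.card ↥T1 * (g1 a * g1 (a * a1)) := by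
        calc Nat.card ↥T1 * Nat.card ↥T1
            = (g1 a * Nat.card (phiA (ρ1 a)).ker) *
              (g1 (a * a1) * Nat.card (phiA (ρ1 (a * a1))).ker) := by rw [e1, e2]
          _ = (g1 a * g1 (a * a1)) *
              (Nat.card (phiA (ρ1 a)).ker * Nat.card (phiA (ρ1 (a * a1))).ker) := by ring
          _ ≤ (g1 a * g1 (a * a1)) * Nat.card ↥T1 := Nat.mul_le_mul_left _ h3
          _ = Nat.card ↥T1 * (g1 a * g1 (a * a1)) := mul_comm _ _
      exact Nat.le_of_mul_le_mul_left key hpos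
    -- key inequality
    have hkey : ∀ a : A, g0 a ^ 2 * Nat.card ↥T1 ≤ r ^ 2 := by
      intro a
      have h1 : g0 a * g1 a ≤ r := by rw [← hsplit a]; exact hmax' a
      have h2 : g0 a * g1 (a * a1) ≤ r := by
        have h2a := hmax' (a * a1)
        rw [hsplit (a * a1)] at h2a
        have : g0 (a * a1) = g0 a := by rw [hg0]; simp only; rw [h01 a]
        rwa [this] at h2a
      calc g0 a ^ 2 * Nat.card ↥T1 ≤ g0 a ^ 2 * (g1 a * g1 (a * a1)) :=
            Nat.mul_le_mul_left _ (hgrass a)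
        _ = (g0 a * g1 a) * (g0 a * g1 (a * a1)) := by ring
        _ ≤ r * r := Nat.mul_le_mul h1 h2
        _ = r ^ 2 := (sq r).symm
    -- recursion on T0
    have hT1r : Nat.card ↥T1 = r := rfl
    have hT0lt : Nat.card ↥T0 < Nat.card M := by
      rw [hcards]
      have h0 : 0 < Nat.card ↥T0 := Nat.card_pos
      calc Nat.card ↥T0 = 1 * Nat.card ↥T0 := (one_mul _).symm
        _ < Nat.card ↥T1 * Nat.card ↥T0 := by
            apply Nat.mul_lt_mul_of_lt_of_le _ le_rfl h0
            rw [hT1r]; exact hr2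
    have hfix0 : ∀ v : ↥T0, (∀ a : A, ρ0 a v = v) → v = 1 := by
      intro v hv
      refine Subtype.ext ?_
      rw [OneMemClass.coe_one]
      refine hfix (v : M) (fun a => ?_)
      have := congrArg Subtype.val (hv a)
      rw [hρ0, restrictHom_apply_coe] at this
      exact this
    obtain ⟨a2, ha2⟩ := IH (Nat.card ↥T0) (lt_of_lt_of_le hT0lt hk) ↥T0 A ρ0 le_rfl
      (hcop.coprime_dvd_left (Subgroup.card_subgroup_dvd_card T0)) hfix0
    refine ⟨a1, ?_⟩
    calc Nat.card M = Nat.card ↥T1 * Nat.card ↥T0 := hcards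
      _ ≤ Nat.card ↥T1 * (g0 a2) ^ 2 := Nat.mul_le_mul_left _ ha2
      _ = (g0 a2) ^ 2 * Nat.card ↥T1 := mul_comm _ _
      _ ≤ r ^ 2 := hkey a2

end Stage5

namespace Stage6
open BCA Subgroup Stage2 Stage3 Stage4 Stage5
open scoped IsMulCommutative

variable {V : Type} [CommGroup V] [Finite V]

lemma abelian_bound (A : Subgroup (MulAut V)) (hA : IsMulCommutative ↥A)
    (hcop : (Nat.card V).Coprime (Nat.card ↥A)) {n : ℕ}
    (hn : ∀ a ∈ A, Nat.card (phiA a).range ≤ n) :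
    Nat.card ↥A ≤ (n ^ 2) ^ (n ^ 2) := by
  classical
  haveI := hA
  letI : Fintype ↥A := Fintype.ofFinite ↥A
  have hn1 : (1 : ℕ) ≤ n := le_trans Nat.card_pos (hn 1 A.one_mem)
  set W : Subgroup V := ⨆ (a : ↥A), (phiA (a : MulAut V)).range with hW
  have hrange_le_W : ∀ a : ↥A, (phiA (a : MulAut V)).range ≤ W :=
    fun a => le_iSup (fun b : ↥A => (phiA (b : MulAut V)).range) a
  have hcomm : ∀ (a b : ↥A) (x : V),
      (a : MulAut V) ((b : MulAut V) x) = (b : MulAut V) ((a : MulAut V) x) := by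
    intro a b x
    rw [← MulAut.mul_apply, ← MulAut.mul_apply]
    have h1 : (a * b : ↥A) = b * a := mul_comm a b
    have h2 := congrArg Subtype.val h1
    push_cast at h2
    rw [h2]
  have hinvW : ∀ (a : ↥A), ∀ x ∈ W, (a : MulAut V) x ∈ W := by
    intro a x hx
    refine Subgroup.iSup_induction _
      (C := fun y => (a : MulAut V) y ∈ W) hx ?_ ?_ ?_
    · rintro b y ⟨v, rfl⟩
      refine hrange_le_W b ?_
      refine ⟨(a : MulAut V) v, ?_⟩
      rw [phiA_apply, phiA_apply, map_mul, map_inv, hcomm a b]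
    · simpa using one_mem W
    · intro x y hx hy
      rw [map_mul]; exact mul_mem hx hy
  have hinvW' : ∀ (a : ↥A), ∀ x ∈ W, A.subtype a x ∈ W := hinvW
  set ρW := restrictHom W A.subtype hinvW' with hρW
  set NA : V →* V := ∏ a : ↥A, MulEquiv.toMonoidHom (a : MulAut V) with hNA
  have hNAapp : ∀ v : V, NA v = ∏ a : ↥A, (a : MulAut V) v := by
    intro v
    rw [hNA]
    simp [MonoidHom.finset_prod_apply]
  have hNker : ∀ (b : ↥A), ∀ x ∈ (phiA (b : MulAut V)).range, NA x = 1 := by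
    rintro b x ⟨v, rfl⟩
    rw [phiA_apply, map_mul, map_inv, hNAapp, hNAapp]
    have hre : (∏ a : ↥A, (a : MulAut V) ((b : MulAut V) v)) = ∏ a : ↥A, (a : MulAut V) v := by
      refine Fintype.prod_equiv (Equiv.mulRight b) _ _ (fun a => ?_)
      show (a : MulAut V) ((b : MulAut V) v) = ((a * b : ↥A) : MulAut V) v
      push_cast
      rw [MulAut.mul_apply]
    rw [hre, inv_mul_cancel]
  have hWker : ∀ x ∈ W, NA x = 1 := by
    intro x hx
    refine Subgroup.iSup_induction _ (C := fun y => NA y = 1) hx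
      (fun b y hy => hNker b y hy) (map_one NA) ?_
    intro x y hx hy; rw [map_mul, hx, hy, mul_one]
  have hfixW : ∀ v : ↥W, (∀ a : ↥A, ρW a v = v) → v = 1 := by
    intro v hv
    have hfix' : ∀ a : ↥A, (a : MulAut V) (v : V) = (v : V) := by
      intro a
      have h1 := congrArg Subtype.val (hv a)
      rwa [hρW, restrictHom_apply_coe] at h1
    have h1 : NA (v : V) = (v : V) ^ (Nat.card ↥A) := by
      rw [hNAapp]
      calc (∏ a : ↥A, (a : MulAut V) (v : V)) = ∏ _a : ↥A, (v : V) :=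
            Finset.prod_congr rfl (fun a _ => hfix' a)
        _ = (v : V) ^ (Fintype.card ↥A) := by rw [Finset.prod_const, Finset.card_univ]
        _ = (v : V) ^ (Nat.card ↥A) := by rw [Nat.card_eq_fintype_card]
    have h2 : NA (v : V) = 1 := hWker _ v.2
    rw [h1] at h2
    have h3 : orderOf (v : V) ∣ Nat.gcd (Nat.card V) (Nat.card ↥A) :=
      Nat.dvd_gcd (orderOf_dvd_natCard _) (orderOf_dvd_of_pow_eq_one h2)
    rw [hcop.gcd_eq_one, Nat.dvd_one, orderOf_eq_one_iff] at h3
    exact Subtype.ext (by rw [h3, OneMemClass.coe_one])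
  obtain ⟨a0, ha0⟩ := core (Nat.card ↥W) ↥W ↥A ρW le_rfl
    (hcop.coprime_dvd_left (Subgroup.card_subgroup_dvd_card W)) hfixW
  have hres : ∀ a : ↥A,
      Nat.card (phiA (ρW a)).range ≤ Nat.card (phiA (a : MulAut V)).range := by
    intro a
    have hmm : ∀ x : ↥(phiA (ρW a)).range, ((x : ↥W) : V) ∈ (phiA (a : MulAut V)).range := by
      rintro ⟨x, ⟨w, rfl⟩⟩
      refine ⟨(w : V), ?_⟩
      show phiA (a : MulAut V) (w : V) = ((phiA (ρW a) w : ↥W) : V)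
      rw [phiA_apply, phiA_apply]
      push_cast
      rw [hρW, restrictHom_apply_coe]
      rfl
    refine Nat.card_le_card_of_injective
      (fun x => (⟨((x : ↥W) : V), hmm x⟩ : ↥(phiA (a : MulAut V)).range)) ?_
    intro x y hxy
    have h1 := congrArg Subtype.val hxy
    exact Subtype.ext (Subtype.ext h1)
  have hWn : Nat.card ↥W ≤ n ^ 2 :=
    le_trans ha0 (Nat.pow_le_pow_left (le_trans (hres a0) (hn _ a0.2)) 2)
  have hinj : Function.Injective (fun a : ↥A => (fun w : ↥W => ρW a w)) := by
    intro a b hab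
    have hab' : ∀ x ∈ W, (a : MulAut V) x = (b : MulAut V) x := by
      intro x hx
      have h1 := congrArg (fun f => f (⟨x, hx⟩ : ↥W)) hab
      have h2 := congrArg Subtype.val h1
      rwa [hρW, restrictHom_apply_coe, restrictHom_apply_coe] at h2
    set c : ↥A := a * b⁻¹ with hc
    have hcoef : (c : MulAut V) = (b : MulAut V)⁻¹ * (a : MulAut V) := by
      have h1 : (c : ↥A) = b⁻¹ * a := by rw [hc, mul_comm]
      have h2 := congrArg Subtype.val h1
      push_cast at h2
      exact h2
    have hcW : ∀ x ∈ W, (c : MulAut V) x = x := by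
      intro x hx
      rw [hcoef, MulAut.mul_apply, hab' x hx]
      exact (b : MulAut V).symm_apply_apply x
    have hctriv : ∀ v : V, (c : MulAut V) v = v := by
      refine trivial_of_trivial_on_range (c : MulAut V) (N := Nat.card ↥A) ?_ hcop ?_
      · rw [← SubgroupClass.coe_pow, pow_card_eq_one', OneMemClass.coe_one]
      · intro w hw
        exact hcW w (hrange_le_W c hw)
    have hc1 : c = 1 := by
      refine Subtype.ext ?_
      refine DFunLike.ext _ _ (fun v => ?_)
      rw [hctriv v]
      rfl
    rw [hc, mul_inv_eq_one] at hc1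
    exact hc1
  have hcardA : Nat.card ↥A ≤ Nat.card (↥W → ↥W) := Nat.card_le_card_of_injective _ hinj
  rw [Nat.card_fun] at hcardA
  calc Nat.card ↥A ≤ Nat.card ↥W ^ Nat.card ↥W := hcardA
    _ ≤ (n ^ 2) ^ Nat.card ↥W := Nat.pow_le_pow_left hWn _
    _ ≤ (n ^ 2) ^ (n ^ 2) := Nat.pow_le_pow_right (Nat.one_le_pow _ _ hn1) hWn

end Stage6

namespace Stage7
open BCA Subgroup Stage2 Stage3 Stage4

lemma centralizer_normal {G : Type*} [Group G] (H : Subgroup G) [hH : H.Normal] :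
    (Subgroup.centralizer (H : Set G)).Normal := by
  constructor
  intro c hc g
  rw [Subgroup.mem_centralizer_iff] at hc ⊢
  intro h hh
  have h1 : g⁻¹ * h * g ∈ H := by
    have := hH.conj_mem h hh g⁻¹
    simpa using this
  have h2 := hc _ h1
  calc h * (g * c * g⁻¹) = g * ((g⁻¹ * h * g) * c) * g⁻¹ := by group
    _ = g * (c * (g⁻¹ * h * g)) * g⁻¹ := by rw [h2]
    _ = (g * c * g⁻¹) * h := by group

lemma meets_center {q : ℕ} [Fact q.Prime] {G : Type} [Group G] [Finite G] (hG : IsPGroup q G)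
    (N : Subgroup G) [hN : N.Normal] (hbot : N ≠ ⊥) :
    ∃ z : G, z ∈ N ∧ z ≠ 1 ∧ z ∈ Subgroup.center G := by
  classical
  letI : MulAction G ↥N := MulAction.compHom ↥N (MulAut.conjNormal (H := N))
  have hsmul : ∀ (g : G) (x : ↥N), g • x = MulAut.conjNormal g x := fun _ _ => rfl
  have hmod := hG.card_modEq_card_fixedPoints ↥N
  have hdvd : q ∣ Nat.card ↥N := by
    obtain ⟨k, hk⟩ := (IsPGroup.iff_card).mp (hG.to_subgroup N)
    have hk1 : k ≠ 0 := by
      intro h0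
      rw [h0, pow_zero] at hk
      exact hbot (Subgroup.card_eq_one.mp hk)
    rw [hk]; exact dvd_pow_self q hk1
  have hfixdvd : q ∣ Nat.card (MulAction.fixedPoints G ↥N) :=
    (Nat.modEq_zero_iff_dvd).mp ((hmod.symm).trans (Nat.modEq_zero_iff_dvd.mpr hdvd))
  have hone : (⟨1, N.one_mem⟩ : ↥N) ∈ MulAction.fixedPoints G ↥N := by
    rw [MulAction.mem_fixedPoints]
    intro g
    rw [hsmul]
    have : ((⟨1, N.one_mem⟩ : ↥N)) = (1 : ↥N) := rfl
    rw [this, map_one]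
  haveI : Nonempty (MulAction.fixedPoints G ↥N) := ⟨⟨_, hone⟩⟩
  have hcardfix : 1 < Nat.card (MulAction.fixedPoints G ↥N) := by
    have hpos : 0 < Nat.card (MulAction.fixedPoints G ↥N) := Nat.card_pos
    have hq2 : 2 ≤ q := (Fact.out : q.Prime).two_le
    have := Nat.le_of_dvd hpos hfixdvd
    omega
  letI : Fintype (MulAction.fixedPoints G ↥N) := Fintype.ofFinite _
  obtain ⟨y, hy⟩ := Fintype.exists_ne_of_one_lt_card
    (α := ↥(MulAction.fixedPoints G ↥N))
    (by rw [← Nat.card_eq_fintype_card]; exact hcardfix) ⟨⟨1, N.one_mem⟩, hone⟩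
  refine ⟨((y : ↥N) : G), (y : ↥N).2, ?_, ?_⟩
  · intro h1
    exact hy (Subtype.ext (Subtype.ext h1))
  · rw [Subgroup.mem_center_iff]
    intro g
    have h0 := y.2
    rw [MulAction.mem_fixedPoints] at h0
    have h2 := h0 g
    rw [hsmul] at h2
    have h3 := congrArg Subtype.val h2
    rw [MulAut.conjNormal_apply] at h3
    calc g * ((y : ↥N) : G) = (g * ((y : ↥N) : G) * g⁻¹) * g := by group
      _ = ((y : ↥N) : G) * g := by rw [h3]

end Stage7

namespace Stage8
open BCA Subgroup Stage2 Stage3 Stage4 Stage7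

lemma pgroup_bound {q : ℕ} [Fact q.Prime] (G : Type) [Group G] [Finite G] (hG : IsPGroup q G)
    {a : ℕ} (ha : ∀ B : Subgroup G, IsMulCommutative ↥B → Nat.card ↥B ≤ a) :
    Nat.card G ≤ a.factorial * a := by
  classical
  set s : Set ℕ := {m | ∃ B : Subgroup G, B.Normal ∧ IsMulCommutative ↥B ∧ Nat.card ↥B = m} with hs
  have hbotcomm : IsMulCommutative ↥(⊥ : Subgroup G) := by
    constructor; constructor
    intro x y
    have hx := x.2; have hy := y.2
    rw [Subgroup.mem_bot] at hx hy
    refine Subtype.ext ?_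
    push_cast
    rw [hx, hy]
  have hsne : s.Nonempty := ⟨1, ⊥, inferInstance, hbotcomm, Subgroup.card_bot⟩
  have hsbdd : BddAbove s := by
    refine ⟨Nat.card G, ?_⟩
    rintro m ⟨B, -, -, rfl⟩
    exact Nat.le_of_dvd Nat.card_pos (Subgroup.card_subgroup_dvd_card B)
  obtain ⟨A0, hA0norm, hA0comm, hA0card⟩ := Nat.sSup_mem hsne hsbdd
  haveI := hA0norm; haveI := hA0comm
  have hmaxcard : ∀ B : Subgroup G, B.Normal → IsMulCommutative ↥B →
      Nat.card ↥B ≤ Nat.card ↥A0 := by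
    intro B h1 h2
    rw [hA0card]
    exact le_csSup hsbdd ⟨B, h1, h2, rfl⟩
  -- step 1 : the centralizer of A0 equals A0
  have hC : Subgroup.centralizer (A0 : Set G) ≤ A0 := by
    by_contra hcon
    obtain ⟨x, hxC, hxA⟩ := SetLike.not_le_iff_exists.mp hcon
    haveI := centralizer_normal A0
    set π := QuotientGroup.mk' A0 with hπ
    set Nbar := Subgroup.map π (Subgroup.centralizer (A0 : Set G)) with hNbar
    haveI : Nbar.Normal :=
      Subgroup.Normal.map (centralizer_normal A0) π (QuotientGroup.mk'_surjective A0)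
    have hNbar_ne : Nbar ≠ ⊥ := by
      intro hbot
      have hx1 : π x ∈ Nbar := ⟨x, hxC, rfl⟩
      rw [hbot, Subgroup.mem_bot] at hx1
      exact hxA ((QuotientGroup.eq_one_iff x).mp hx1)
    obtain ⟨zb, hzbN, hzb1, hzbC⟩ := meets_center (hG.to_quotient A0) Nbar hNbar_ne
    obtain ⟨c, hcC, hcz⟩ := Subgroup.mem_map.mp hzbN
    have hzpow_norm : (Subgroup.zpowers zb).Normal := by
      constructor
      intro m hm g
      have hcent : g * m = m * g := (Subgroup.mem_center_iff.mp
        (Subgroup.zpowers_le.mpr hzbC hm) g)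
      have : g * m * g⁻¹ = m := by rw [hcent]; group
      rw [this]; exact hm
    set B := Subgroup.comap π (Subgroup.zpowers zb) with hB
    haveI hBnorm : B.Normal := Subgroup.Normal.comap hzpow_norm π
    have hA0B : A0 ≤ B := by
      intro y hy
      have h1 : π y = 1 := (QuotientGroup.eq_one_iff y).mpr hy
      show π y ∈ Subgroup.zpowers zb
      rw [h1]; exact one_mem _
    have hcB : c ∈ B := by
      show π c ∈ Subgroup.zpowers zb
      rw [hcz]; exact Subgroup.mem_zpowers zb
    have hcA : c ∉ A0 := by
      intro hca
      exact hzb1 (by rw [← hcz]; exact (QuotientGroup.eq_one_iff c).mpr hca)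
    have hcA0comm : ∀ y ∈ A0, Commute c y := by
      intro y hy
      exact ((Subgroup.mem_centralizer_iff.mp hcC) y hy).symm
    have hBcomm : IsMulCommutative ↥B := by
      constructor; constructor
      intro u v
      obtain ⟨k, hk⟩ := Subgroup.mem_zpowers_iff.mp (u.2 : π (u : G) ∈ Subgroup.zpowers zb)
      obtain ⟨l, hl⟩ := Subgroup.mem_zpowers_iff.mp (v.2 : π (v : G) ∈ Subgroup.zpowers zb)
      have hu : (u : G) * (c ^ k)⁻¹ ∈ A0 := by
        rw [← QuotientGroup.ker_mk' A0, MonoidHom.mem_ker]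
        show π ((u : G) * (c ^ k)⁻¹) = 1
        rw [map_mul, map_inv, map_zpow, hcz, ← hk]
        exact mul_inv_cancel _
      have hv : (v : G) * (c ^ l)⁻¹ ∈ A0 := by
        rw [← QuotientGroup.ker_mk' A0, MonoidHom.mem_ker]
        show π ((v : G) * (c ^ l)⁻¹) = 1
        rw [map_mul, map_inv, map_zpow, hcz, ← hl]
        exact mul_inv_cancel _
      set au := (u : G) * (c ^ k)⁻¹ with hau
      set av := (v : G) * (c ^ l)⁻¹ with hav
      have hu' : (u : G) = au * c ^ k := by rw [hau]; group
      have hv' : (v : G) = av * c ^ l := by rw [hav]; group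
      have h1 : Commute au av :=
        Subgroup.mul_comm_of_mem_isMulCommutative A0 hu hv
      have h2 : Commute (c ^ k) av := ((hcA0comm av hv).zpow_left k)
      have h3 : Commute (c ^ l) au := ((hcA0comm au hu).zpow_left l)
      have h4 : Commute (c ^ k) ((c ^ l : G)) := (Commute.refl c).zpow_zpow k l
      have e : Commute ((u : G)) ((v : G)) := by
        rw [hu', hv']
        exact Commute.mul_left (h1.mul_right h3.symm) (h2.mul_right h4)
      exact Subtype.ext e.eq
    have hlt : Nat.card ↥A0 < Nat.card ↥B :=
      card_lt_card_of_lt (lt_of_le_of_ne hA0B (fun h => hcA (h ▸ hcB)))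
    have := hmaxcard B hBnorm hBcomm
    omega
  have hCeq : Subgroup.centralizer (A0 : Set G) = A0 :=
    le_antisymm hC (Subgroup.le_centralizer A0)
  -- step 2 : embed G/A0 into the automorphisms of A0
  set ψ := MulAut.conjNormal (G := G) (H := A0) with hψ
  have hker : ψ.ker ≤ A0 := by
    intro g hg
    rw [← hCeq, Subgroup.mem_centralizer_iff]
    intro h hh
    rw [MonoidHom.mem_ker] at hg
    have h5 : ((ψ g) ⟨h, hh⟩ : ↥A0) = ⟨h, hh⟩ := by rw [hg]; rfl
    have h6 := congrArg Subtype.val h5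
    rw [hψ, MulAut.conjNormal_apply] at h6
    calc h * g = (g * h * g⁻¹) * g := by rw [h6]
      _ = g * h := by group
  have hcard1 : Nat.card G = Nat.card ψ.range * Nat.card ψ.ker :=
    (card_range_mul_card_ker ψ).symm
  have h2 : Nat.card ψ.ker ≤ a := le_trans (Subgroup.card_le_of_le hker) (ha A0 hA0comm)
  have h3 : Nat.card ψ.range ≤ a.factorial := by
    have hb1 : Nat.card ψ.range ≤ Nat.card (MulAut ↥A0) :=
      Nat.card_le_card_of_injective Subtype.val Subtype.val_injective
    have hb2 : Nat.card (MulAut ↥A0) ≤ Nat.card (Equiv.Perm ↥A0) :=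
      Nat.card_le_card_of_injective MulEquiv.toEquiv MulEquiv.toEquiv_injective
    have hb3 : Nat.card (Equiv.Perm ↥A0) = (Nat.card ↥A0).factorial := by
      letI := Fintype.ofFinite ↥A0
      rw [Nat.card_eq_fintype_card, Fintype.card_perm, Nat.card_eq_fintype_card]
    have hb4 : (Nat.card ↥A0).factorial ≤ a.factorial :=
      Nat.factorial_le (ha A0 hA0comm)
    omega
  calc Nat.card G = Nat.card ψ.range * Nat.card ψ.ker := hcard1
    _ ≤ a.factorial * a := Nat.mul_le_mul h3 h2

end Stage8

namespace Stage9
open BCA Subgroup Stage2 Stage3 Stage6 Stage8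

lemma map_isCommutative {G H : Type*} [Group G] [Group H] (f : G →* H)
    (hf : Function.Injective f) (B : Subgroup G) (hB : IsMulCommutative ↥B) :
    IsMulCommutative ↥(B.map f) := by
  haveI := hB
  refine ⟨⟨fun u v => Subtype.ext ?_⟩⟩
  obtain ⟨x, hxB, hx⟩ := u.2
  obtain ⟨y, hyB, hy⟩ := v.2
  push_cast
  rw [← hx, ← hy, ← map_mul, ← map_mul, Subgroup.mul_comm_of_mem_isMulCommutative B hxB hyB]

lemma card_map_of_injective {G H : Type*} [Group G] [Group H] (f : G →* H)
    (hf : Function.Injective f) (B : Subgroup G) :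
    Nat.card ↥(B.map f) = Nat.card ↥B :=
  (Nat.card_congr (B.equivMapOfInjective f hf).toEquiv).symm

theorem main :
    ∃ f f' : ℕ → ℕ, ∀ (V : Type) [CommGroup V] [Finite V]
      (U : Subgroup (MulAut V)) (n : ℕ),
      Nat.Coprime (Nat.card V) (Nat.card ↥U) →
      (∀ u ∈ U, Nat.card ↥(Subgroup.closure {w : V | ∃ v : V, w = v⁻¹ * u v}) ≤ n) →
      Nat.card ↥(Subgroup.closure
          {w : V | ∃ (u : MulAut V) (v : V), u ∈ U ∧ w = v⁻¹ * u v}) ≤ f n ∧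
        Nat.card ↥U ≤ f' n := by
  classical
  refine ⟨fun n => n ^ ((((n ^ 2) ^ (n ^ 2)).factorial * (n ^ 2) ^ (n ^ 2)) ^ ((n ^ 2) ^ (n ^ 2))),
    fun n => (((n ^ 2) ^ (n ^ 2)).factorial * (n ^ 2) ^ (n ^ 2)) ^ ((n ^ 2) ^ (n ^ 2)), ?_⟩
  intro V _ _ U n hcop hsmall
  set α : ℕ := (n ^ 2) ^ (n ^ 2) with hαdef
  set β : ℕ := α.factorial * α with hβdef
  haveI : Finite (MulAut V) := inferInstance
  have hn1 : (1 : ℕ) ≤ n := le_trans Nat.card_pos (hsmall 1 U.one_mem)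
  have hα1 : (1 : ℕ) ≤ α := Nat.one_le_pow _ _ (Nat.one_le_pow _ _ hn1)
  have hβ1 : (1 : ℕ) ≤ β := Nat.mul_pos (Nat.factorial_pos α) hα1
  have hrange : ∀ u : MulAut V, u ∈ U → Nat.card (phiA u).range ≤ n := by
    intro u hu
    refine le_trans (Subgroup.card_le_of_le ?_) (hsmall u hu)
    rintro x ⟨v, rfl⟩
    exact Subgroup.subset_closure ⟨v, rfl⟩
  have hab : ∀ B : Subgroup ↥U, IsMulCommutative ↥B → Nat.card ↥B ≤ α := by
    intro B hB
    have hcardeq : Nat.card ↥(B.map U.subtype) = Nat.card ↥B :=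
      card_map_of_injective _ (Subgroup.subtype_injective U) B
    have hB'comm : IsMulCommutative ↥(B.map U.subtype) :=
      map_isCommutative _ (Subgroup.subtype_injective U) B hB
    have hcop2 : (Nat.card V).Coprime (Nat.card ↥(B.map U.subtype)) := by
      rw [hcardeq]
      exact hcop.coprime_dvd_right (Subgroup.card_subgroup_dvd_card B)
    have hnB : ∀ b ∈ B.map U.subtype, Nat.card (phiA b).range ≤ n :=
      fun b hb => hrange b (Subgroup.map_subtype_le B hb)
    have h1 := abelian_bound (B.map U.subtype) hB'comm hcop2 hnB
    rw [hcardeq] at h1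
    rw [hαdef]
    exact h1
  have hcardU : Nat.card ↥U ≤ β ^ α := by
    have hU0 : Nat.card ↥U ≠ 0 := Nat.card_pos.ne'
    have hprime_le : ∀ p ∈ (Nat.card ↥U).primeFactors, p ≤ α := by
      intro p hp
      have hpp : p.Prime := Nat.prime_of_mem_primeFactors hp
      have hpdvd : p ∣ Nat.card ↥U := Nat.dvd_of_mem_primeFactors hp
      haveI : Fact p.Prime := ⟨hpp⟩
      letI : Fintype ↥U := Fintype.ofFinite ↥U
      obtain ⟨x, hx⟩ := exists_prime_orderOf_dvd_card (G := ↥U) p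
        (by rw [← Nat.card_eq_fintype_card]; exact hpdvd)
      have h1 : Nat.card ↥(Subgroup.zpowers x) = p := by rw [Nat.card_zpowers, hx]
      have h2 := hab (Subgroup.zpowers x) (Subgroup.zpowers_isMulCommutative x)
      omega
    have hfactor : ∀ p ∈ (Nat.card ↥U).primeFactors,
        p ^ (Nat.card ↥U).factorization p ≤ β := by
      intro p hp
      have hpp : p.Prime := Nat.prime_of_mem_primeFactors hp
      haveI : Fact p.Prime := ⟨hpp⟩
      obtain ⟨P⟩ : Nonempty (Sylow p ↥U) := inferInstance
      have hPcard : Nat.card ↥(P : Subgroup ↥U) = p ^ (Nat.card ↥U).factorization p :=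
        Sylow.card_eq_multiplicity P
      have hPB : ∀ C : Subgroup ↥(P : Subgroup ↥U), IsMulCommutative ↥C → Nat.card ↥C ≤ α := by
        intro C hC
        have h1 : Nat.card ↥(C.map (P : Subgroup ↥U).subtype) = Nat.card ↥C :=
          card_map_of_injective _ (Subgroup.subtype_injective _) C
        have h2 := hab (C.map (P : Subgroup ↥U).subtype)
          (map_isCommutative _ (Subgroup.subtype_injective _) C hC)
        omega
      have h3 := pgroup_bound ↥(P : Subgroup ↥U) P.isPGroup' hPB
      rw [hPcard] at h3
      rw [hβdef]
      exact h3
    have hsupp : (Nat.card ↥U).primeFactors.card ≤ α := by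
      have hss : (Nat.card ↥U).primeFactors ⊆ Finset.Icc 1 α := by
        intro p hp
        rw [Finset.mem_Icc]
        exact ⟨(Nat.prime_of_mem_primeFactors hp).one_lt.le, hprime_le p hp⟩
      calc (Nat.card ↥U).primeFactors.card ≤ (Finset.Icc 1 α).card := Finset.card_le_card hss
        _ = α := by rw [Nat.card_Icc]; omega
    calc Nat.card ↥U = (Nat.card ↥U).factorization.prod (fun p e => p ^ e) :=
          (Nat.factorization_prod_pow_eq_self hU0).symm
      _ = ∏ p ∈ (Nat.card ↥U).primeFactors, p ^ (Nat.card ↥U).factorization p :=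
          Nat.prod_factorization_eq_prod_primeFactors _
      _ ≤ β ^ (Nat.card ↥U).primeFactors.card :=
          Finset.prod_le_pow_card _ _ _ hfactor
      _ ≤ β ^ α := Nat.pow_le_pow_right hβ1 hsupp
  refine ⟨?_, hcardU⟩
  letI : Fintype ↥U := Fintype.ofFinite ↥U
  have hS : Subgroup.closure {w : V | ∃ (u : MulAut V) (v : V), u ∈ U ∧ w = v⁻¹ * u v}
      ≤ ⨆ u : ↥U, (phiA (u : MulAut V)).range := by
    rw [Subgroup.closure_le]
    rintro x ⟨u, v, hu, rfl⟩
    exact le_iSup (fun w : ↥U => (phiA (w : MulAut V)).range) ⟨u, hu⟩ ⟨v, rfl⟩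
  have h2 : (⨆ u : ↥U, (phiA (u : MulAut V)).range)
      = Finset.univ.sup (fun u : ↥U => (phiA (u : MulAut V)).range) :=
    (Finset.sup_univ_eq_iSup _).symm
  have h3 := card_finsetsup_le (Finset.univ : Finset ↥U)
    (fun u : ↥U => (phiA (u : MulAut V)).range)
  have h4 : (∏ u : ↥U, Nat.card (phiA (u : MulAut V)).range) ≤ n ^ (Nat.card ↥U) := by
    calc (∏ u : ↥U, Nat.card (phiA (u : MulAut V)).range)
        ≤ n ^ (Finset.univ : Finset ↥U).card :=
          Finset.prod_le_pow_card _ _ _ (fun u _ => hrange u u.2)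
      _ = n ^ (Nat.card ↥U) := by rw [Finset.card_univ, Nat.card_eq_fintype_card]
  calc Nat.card ↥(Subgroup.closure {w : V | ∃ (u : MulAut V) (v : V), u ∈ U ∧ w = v⁻¹ * u v})
      ≤ Nat.card ↥(⨆ u : ↥U, (phiA (u : MulAut V)).range) := Subgroup.card_le_of_le hS
    _ = Nat.card ↥(Finset.univ.sup (fun u : ↥U => (phiA (u : MulAut V)).range)) := by rw [h2]
    _ ≤ ∏ u : ↥U, Nat.card (phiA (u : MulAut V)).range := h3
    _ ≤ n ^ (Nat.card ↥U) := h4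
    _ ≤ n ^ (β ^ α) := Nat.pow_le_pow_right hn1 hcardU

end Stage9

theorem bounded_commutators_coprime_action :
    ∃ f f' : ℕ → ℕ, ∀ (V : Type) [CommGroup V] [Finite V]
      (U : Subgroup (MulAut V)) (n : ℕ),
      Nat.Coprime (Nat.card V) (Nat.card ↥U) →
      (∀ u ∈ U, Nat.card ↥(Subgroup.closure {w : V | ∃ v : V, w = v⁻¹ * u v}) ≤ n) →
      Nat.card ↥(Subgroup.closure
          {w : V | ∃ (u : MulAut V) (v : V), u ∈ U ∧ w = v⁻¹ * u v}) ≤ f n ∧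
        Nat.card ↥U ≤ f' n :=
  Stage9.main
end
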